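/- arXiv:1107.5972 — 3 statements merged into one kernel-verified Lean document; each statement's English description precedes it below -/
import Mathlib

section
/- Let F : ℝ → ℝ be a cumulative distribution function. Suppose there exist sequences (a_m) of positive reals and (b_m) of reals and a cumulative distribution function H which is nondegenerate (there exists x with 0 < H(x) < 1) such that for every continuity point x of H, F(x/a_m + b_m)^m → H(x) as m → ∞. Then there exist a > 0 and b ∈ ℝ such that H has one of the following three forms: (Type 1, Gumbel) H(x) = exp(−e^{−(a x + b)}) for all x ∈ ℝ; (Type 2, Fréchet) for some ξ > 0, H(x) = 0 when a x + b ≤ 0 and H(x) = exp(−(a x + b)^{−ξ}) when a x + b > 0; (Type 3, Weibull) for some ξ > 0, H(x) = exp(−(−(a x + b))^{ξ}) when a x + b ≤ 0 and H(x) = 1 when a x + b > 0. -/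
open Filter Set Topology


/-- A cumulative distribution function: monotone nondecreasing, right-continuous,
with values in `[0,1]`, tending to `0` at `-∞` and to `1` at `+∞`. -/
def IsCDF (F : ℝ → ℝ) : Prop :=
  Monotone F ∧ (∀ x, ContinuousWithinAt F (Set.Ici x) x) ∧
    (∀ x, F x ∈ Set.Icc (0 : ℝ) 1) ∧
    Filter.Tendsto F Filter.atBot (nhds 0) ∧ Filter.Tendsto F Filter.atTop (nhds 1)


lemma ftg_exists_notMem {C : Set ℝ} (hC : C.Countable) {a b : ℝ} (h : a < b) :
    ∃ x, x ∈ Set.Ioo a b ∧ x ∉ C := by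
  by_contra hcon
  push_neg at hcon
  have hsub : Set.Ioo a b ⊆ C := fun x hx => hcon x hx
  have : (Set.Ioo a b).Countable := hC.mono hsub
  have hcard := Cardinal.mk_Ioo_real h
  have h2 := this.le_aleph0
  rw [hcard] at h2
  exact absurd h2 Cardinal.aleph0_lt_continuum.not_ge

/-- approach `t` from the right through the complement of a countable set -/
lemma ftg_approx_right {C : Set ℝ} (hC : C.Countable) (t : ℝ) :
    ∃ s : ℕ → ℝ, (∀ k, s k ∉ C) ∧ (∀ k, t < s k) ∧
      Filter.Tendsto s Filter.atTop (nhds t) := by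
  have h : ∀ k : ℕ, ∃ x, x ∈ Set.Ioo t (t + 1/(k+1 : ℝ)) ∧ x ∉ C := fun k =>
    ftg_exists_notMem hC (by nlinarith [show (0:ℝ) < 1/(k+1:ℝ) by positivity])
  choose s hs hsC using h
  refine ⟨s, hsC, fun k => (hs k).1, ?_⟩
  have h1 : Filter.Tendsto (fun k : ℕ => t + 1/(k+1 : ℝ)) Filter.atTop (nhds t) := by
    have := tendsto_one_div_add_atTop_nhds_zero_nat (𝕜 := ℝ)
    simpa using (tendsto_const_nhds (x := t)).add this
  exact tendsto_of_tendsto_of_tendsto_of_le_of_le tendsto_const_nhds h1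
    (fun k => (hs k).1.le) (fun k => (hs k).2.le)

lemma ftg_approx_left {C : Set ℝ} (hC : C.Countable) (t : ℝ) :
    ∃ s : ℕ → ℝ, (∀ k, s k ∉ C) ∧ (∀ k, s k < t) ∧
      Filter.Tendsto s Filter.atTop (nhds t) := by
  have h : ∀ k : ℕ, ∃ x, x ∈ Set.Ioo (t - 1/(k+1 : ℝ)) t ∧ x ∉ C := fun k =>
    ftg_exists_notMem hC (by
      have : (0:ℝ) < 1/(k+1:ℝ) := by positivity
      linarith)
  choose s hs hsC using h
  refine ⟨s, hsC, fun k => (hs k).2, ?_⟩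
  have h1 : Filter.Tendsto (fun k : ℕ => t - 1/(k+1 : ℝ)) Filter.atTop (nhds t) := by
    have := tendsto_one_div_add_atTop_nhds_zero_nat (𝕜 := ℝ)
    simpa using (tendsto_const_nhds (x := t)).sub this
  exact tendsto_of_tendsto_of_tendsto_of_le_of_le h1 tendsto_const_nhds
    (fun k => (hs k).1.le) (fun k => (hs k).2.le)

/-- composition with a right-continuous function along a sequence from the right -/
lemma ftg_tendsto_right {U : ℝ → ℝ} (hU : ∀ x, ContinuousWithinAt U (Set.Ici x) x)
    {s : ℕ → ℝ} {t : ℝ} (hs : ∀ k, t ≤ s k) (h : Filter.Tendsto s Filter.atTop (nhds t)) :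
    Filter.Tendsto (fun k => U (s k)) Filter.atTop (nhds (U t)) := by
  apply (hU t).tendsto.comp
  rw [tendsto_nhdsWithin_iff]
  exact ⟨h, Filter.Eventually.of_forall fun k => hs k⟩

lemma ftg_rat_btwn {u v : ℝ} (hu : 0 < u) (huv : u < v) :
    ∃ m n : ℕ, 0 < m ∧ 0 < n ∧ u < (m:ℝ)/(n:ℝ) ∧ (m:ℝ)/(n:ℝ) < v := by
  obtain ⟨q, hq1, hq2⟩ := exists_rat_btwn huv
  have hq0 : 0 < q := by
    rw [← Rat.cast_pos (K := ℝ)]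
    linarith
  have hnum : 0 < q.num := Rat.num_pos.mpr hq0
  have hcast : ((q.num.toNat : ℕ) : ℝ)/(q.den : ℝ) = (q : ℝ) := by
    rw [Rat.cast_def]
    congr 1
    have := Int.toNat_of_nonneg hnum.le
    exact_mod_cast congrArg (fun z : ℤ => (z : ℝ)) this
  refine ⟨q.num.toNat, q.den, ?_, q.pos, ?_, ?_⟩
  · omega
  · rw [hcast]; exact hq1
  · rw [hcast]; exact hq2

lemma ftg_squeeze {g B C : ℝ} (hg : 0 < g) (hB : 0 < B) (hC : 0 < C)
    (h1 : ∀ m n : ℕ, 0 < m → 0 < n → g < (m:ℝ)/n → B ≤ ((m:ℝ)/n) * C)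
    (h2 : ∀ m n : ℕ, 0 < m → 0 < n → (m:ℝ)/n < g → ((m:ℝ)/n) * C ≤ B) :
    B = g * C := by
  apply le_antisymm
  · by_contra hcon
    push_neg at hcon
    have hgBC : g < B / C := by
      rw [lt_div_iff₀ hC]
      linarith [hcon]
    obtain ⟨m, n, hm, hn, hq1, hq2⟩ := ftg_rat_btwn hg hgBC
    have := h1 m n hm hn hq1
    have h3 : ((m:ℝ)/n) * C < (B/C) * C := by
      apply mul_lt_mul_of_pos_right hq2 hC
    rw [div_mul_cancel₀ _ (ne_of_gt hC)] at h3
    linarith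
  · by_contra hcon
    push_neg at hcon
    have hBC0 : 0 < B / C := div_pos hB hC
    have hgBC : B / C < g := by
      rw [div_lt_iff₀ hC]
      linarith [hcon]
    obtain ⟨m, n, hm, hn, hq1, hq2⟩ := ftg_rat_btwn hBC0 hgBC
    have := h2 m n hm hn hq2
    have h3 : (B/C) * C < ((m:ℝ)/n) * C := mul_lt_mul_of_pos_right hq1 hC
    rw [div_mul_cancel₀ _ (ne_of_gt hC)] at h3
    linarith

lemma ftg_loglem (f : ℕ → ℝ) (hadd : ∀ m n : ℕ, 1 ≤ m → 1 ≤ n → f (m*n) = f m + f n)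
    (hmono : ∀ m n : ℕ, 1 ≤ m → m ≤ n → f m ≤ f n) :
    ∀ n : ℕ, 1 ≤ n → f n * Real.log 2 = f 2 * Real.log n := by
  have hf1 : f 1 = 0 := by
    have := hadd 1 1 le_rfl le_rfl
    norm_num at this
    linarith
  have hpow : ∀ m : ℕ, 1 ≤ m → ∀ k : ℕ, f (m ^ k) = k * f m := by
    intro m hm k
    induction k with
    | zero => simpa using hf1
    | succ k ih =>
      have h1 : m ^ (k+1) = m ^ k * m := by ring
      rw [h1, hadd _ _ (Nat.one_le_iff_ne_zero.mpr (pow_ne_zero k (by omega))) hm, ih]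
      push_cast
      ring
  have hnn : ∀ m : ℕ, 1 ≤ m → 0 ≤ f m := by
    intro m hm
    have := hmono 1 m le_rfl hm
    linarith [hf1]
  intro n hn
  rcases eq_or_lt_of_le hn with h1 | h2
  · rw [← h1]
    simp [hf1]
  · have hn2 : 2 ≤ n := h2
    have hln2 : 0 < Real.log 2 := Real.log_pos (by norm_num)
    have hlnn : 0 < Real.log n := Real.log_pos (by exact_mod_cast h2)
    have hf2 : 0 ≤ f 2 := hnn 2 one_le_two
    have key : ∀ k : ℕ, 1 ≤ k →
        |(k:ℝ) * f n - ((k:ℝ) * Real.log n / Real.log 2) * f 2| ≤ f 2 := by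
      intro k hk
      set x : ℝ := (k:ℝ) * Real.log n / Real.log 2 with hxdef
      have hx0 : 0 ≤ x := by positivity
      set j : ℕ := ⌊x⌋₊ with hjdef
      have hjx : (j:ℝ) ≤ x := Nat.floor_le hx0
      have hxj : x < (j:ℝ) + 1 := Nat.lt_floor_add_one x
      have hn0 : (0:ℝ) < (n:ℝ) := by positivity
      -- 2^j ≤ n^k
      have hr1 : ((2:ℝ))^j ≤ ((n:ℝ))^k := by
        have hl : Real.log ((2:ℝ)^j) ≤ Real.log ((n:ℝ)^k) := by
          rw [Real.log_pow, Real.log_pow]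
          calc (j:ℝ) * Real.log 2 ≤ x * Real.log 2 := by nlinarith
            _ = (k:ℝ) * Real.log n := by
              rw [hxdef]; field_simp
        have h2pos : (0:ℝ) < (2:ℝ)^j := by positivity
        have hnpos : (0:ℝ) < (n:ℝ)^k := by positivity
        exact (Real.log_le_log_iff h2pos hnpos).mp hl
      have hnat1 : 2^j ≤ n^k := by exact_mod_cast hr1
      -- n^k < 2^(j+1)
      have hr2 : ((n:ℝ))^k < ((2:ℝ))^(j+1) := by
        have hl : Real.log ((n:ℝ)^k) < Real.log ((2:ℝ)^(j+1)) := by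
          rw [Real.log_pow, Real.log_pow]
          have : (k:ℝ) * Real.log n = x * Real.log 2 := by
            rw [hxdef]; field_simp
          rw [this]
          push_cast
          nlinarith
        have h2pos : (0:ℝ) < (2:ℝ)^(j+1) := by positivity
        have hnpos : (0:ℝ) < (n:ℝ)^k := by positivity
        exact (Real.log_lt_log_iff hnpos h2pos).mp hl
      have hnat2 : n^k ≤ 2^(j+1) := by
        have : (n:ℕ)^k < 2^(j+1) := by exact_mod_cast hr2
        omega
      have hm1 : f (2^j) ≤ f (n^k) :=
        hmono _ _ (Nat.one_le_iff_ne_zero.mpr (pow_ne_zero _ (by omega))) hnat1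
      have hm2 : f (n^k) ≤ f (2^(j+1)) :=
        hmono _ _ (Nat.one_le_iff_ne_zero.mpr (pow_ne_zero _ (by omega))) hnat2
      rw [hpow 2 (by omega) j, hpow n (by omega) k] at hm1
      rw [hpow n (by omega) k, hpow 2 (by omega) (j+1)] at hm2
      rw [abs_le]
      push_cast at hm2
      constructor
      · nlinarith
      · nlinarith
    -- conclude
    set D : ℝ := f n * Real.log 2 - f 2 * Real.log n with hDdef
    have hDb : ∀ k : ℕ, 1 ≤ k → |D| ≤ f 2 * Real.log 2 / k := by
      intro k hk
      have hkR : (0:ℝ) < (k:ℝ) := by exact_mod_cast hk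
      have h1 := key k hk
      have h2 : (k:ℝ) * f n - ((k:ℝ) * Real.log n / Real.log 2) * f 2
          = ((k:ℝ) / Real.log 2) * D := by
        rw [hDdef]; field_simp
      rw [h2, abs_mul, abs_of_pos (by positivity : (0:ℝ) < (k:ℝ)/Real.log 2)] at h1
      rw [le_div_iff₀ hkR]
      have h4 : |D| * (k:ℝ) = ((k:ℝ)/Real.log 2 * |D|) * Real.log 2 := by
        field_simp
      rw [h4]
      nlinarith
    have hD0 : D = 0 := by
      by_contra hD
      have habs : 0 < |D| := abs_pos.mpr hD
      obtain ⟨k₀, hk₀⟩ := exists_nat_gt (f 2 * Real.log 2 / |D|)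
      have hk1 : 1 ≤ k₀ + 1 := le_refl 1 |>.trans (Nat.le_add_left 1 k₀)
      have hkR : (0:ℝ) < (k₀+1:ℕ) := by positivity
      have hlt : f 2 * Real.log 2 / |D| < ((k₀+1:ℕ):ℝ) := by
        push_cast
        push_cast at hk₀
        linarith
      have : f 2 * Real.log 2 / ((k₀+1:ℕ):ℝ) < |D| := by
        rw [div_lt_iff₀ hkR]
        rw [div_lt_iff₀ habs] at hlt
        nlinarith
      linarith [hDb (k₀+1) hk1]
    rw [hDdef] at hD0
    linarith

lemma ftg_contract {U : ℝ → ℝ} (hU : IsCDF U) (hnd : ∃ x, 0 < U x ∧ U x < 1)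
    {α β : ℝ} (h0 : 0 < α) (hα : α < 1) (hrel : ∀ y, U y = U (α * y + β)) : False := by
  obtain ⟨hmono, hrc, hicc, hbot, htop⟩ := hU
  obtain ⟨x₀, hx₀, hx₀'⟩ := hnd
  set p : ℝ := β / (1 - α) with hp
  have hfix : ∀ y : ℝ, α * y + β = p + α * (y - p) := by
    intro y
    have h1 : (1 : ℝ) - α ≠ 0 := by linarith
    rw [hp]
    field_simp
    ring
  have hiter : ∀ k : ℕ, ∀ y, U y = U (p + α ^ k * (y - p)) := by
    intro k
    induction k with
    | zero => intro y; norm_num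
    | succ k ih =>
      intro y
      rw [ih y, hrel (p + α ^ k * (y - p))]
      congr 1
      rw [hfix]
      ring
  have hpowlim : Filter.Tendsto (fun k : ℕ => α ^ k) Filter.atTop (nhds 0) :=
    tendsto_pow_atTop_nhds_zero_of_lt_one h0.le hα
  -- constancy above p
  have habove : ∀ y y', p < y → y < y' → U y' = U y := by
    intro y y' hy hyy'
    have : ∀ᶠ k in Filter.atTop, α ^ k * (y' - p) < y - p := by
      have := hpowlim.mul_const (y' - p)
      simp only [zero_mul] at this
      exact this.eventually_lt_const (by linarith)
    obtain ⟨k, hk⟩ := this.exists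
    have h1 : U y' = U (p + α ^ k * (y' - p)) := hiter k y'
    have h2 : U (p + α ^ k * (y' - p)) ≤ U y := hmono (by linarith)
    have h3 : U y ≤ U y' := hmono hyy'.le
    linarith [h1 ▸ h2]
  have hone : ∀ y, p < y → U y = 1 := by
    intro y hy
    have hseq : Filter.Tendsto (fun k : ℕ => U (max y (p+1) + 1 + k)) Filter.atTop (nhds 1) := by
      apply htop.comp
      apply Filter.tendsto_atTop_add_const_left
      exact tendsto_natCast_atTop_atTop
    have hconst : ∀ k : ℕ, U (max y (p+1) + 1 + k) = U y := by
      intro k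
      have h1 : p < max y (p+1) := lt_of_lt_of_le (by linarith) (le_max_right _ _)
      have h2 := habove (max y (p+1)) (max y (p+1) + 1 + k) h1
        (by have := Nat.cast_nonneg (α := ℝ) k; linarith)
      have hUy : U (max y (p+1)) = U y := by
        rcases eq_or_lt_of_le (le_max_left y (p+1)) with he | hl
        · rw [← he]
        · exact habove y (max y (p+1)) hy hl
      rw [h2, hUy]
    exact (tendsto_nhds_unique ((tendsto_congr hconst).mp hseq) tendsto_const_nhds).symm
  -- constancy below p
  have hbelow : ∀ y y', y < y' → y' < p → U y = U y' := by
    intro y y' hyy' hy'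
    have : ∀ᶠ k in Filter.atTop, y' - p < α ^ k * (y - p) := by
      have := hpowlim.mul_const (y - p)
      simp only [zero_mul] at this
      exact this.eventually_const_lt (by linarith)
    obtain ⟨k, hk⟩ := this.exists
    have h1 : U y = U (p + α ^ k * (y - p)) := hiter k y
    have h2 : U y' ≤ U (p + α ^ k * (y - p)) := hmono (by linarith)
    have h3 : U y ≤ U y' := hmono hyy'.le
    linarith [h1 ▸ h2]
  have hzero : ∀ y, y < p → U y = 0 := by
    intro y hy
    have hseq : Filter.Tendsto (fun k : ℕ => U (min y (p-1) - 1 - k)) Filter.atTop (nhds 0) := by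
      apply hbot.comp
      have : Filter.Tendsto (fun k : ℕ => (min y (p-1) - 1) + (-(k:ℝ))) Filter.atTop Filter.atBot :=
        Filter.tendsto_atBot_add_const_left _ _
          ((tendsto_neg_atBot_iff).mpr tendsto_natCast_atTop_atTop)
      simpa [sub_eq_add_neg] using this
    have hconst : ∀ k : ℕ, U (min y (p-1) - 1 - k) = U y := by
      intro k
      have h1 : min y (p-1) < p := lt_of_le_of_lt (min_le_right _ _) (by linarith)
      have h2 := hbelow (min y (p-1) - 1 - k) (min y (p-1)) (by
        have : (0:ℝ) ≤ k := Nat.cast_nonneg k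
        linarith) h1
      have hUy : U (min y (p-1)) = U y := by
        rcases eq_or_lt_of_le (min_le_left y (p-1)) with he | hl
        · rw [he]
        · exact hbelow (min y (p-1)) y hl hy
      rw [h2, hUy]
    exact (tendsto_nhds_unique ((tendsto_congr hconst).mp hseq) tendsto_const_nhds).symm
  rcases lt_trichotomy x₀ p with h | h | h
  · rw [hzero x₀ h] at hx₀; exact lt_irrefl 0 hx₀
  · -- x₀ = p : use right continuity
    have hseq : Filter.Tendsto (fun k : ℕ => U (p + 1/(k+1:ℝ))) Filter.atTop (nhds (U p)) := by
      apply ftg_tendsto_right hrc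
      · intro k
        have : (0:ℝ) < 1/(k+1:ℝ) := by positivity
        linarith
      · have := tendsto_one_div_add_atTop_nhds_zero_nat (𝕜 := ℝ)
        simpa using (tendsto_const_nhds (x := p)).add this
    have hconst : ∀ k : ℕ, U (p + 1/(k+1:ℝ)) = 1 := by
      intro k
      apply hone
      have : (0:ℝ) < 1/(k+1:ℝ) := by positivity
      linarith
    have := tendsto_nhds_unique ((tendsto_congr hconst).mp hseq) tendsto_const_nhds
    rw [← h] at this
    rw [this] at hx₀'
    exact lt_irrefl 1 hx₀'
  · rw [hone x₀ h] at hx₀'; exact lt_irrefl 1 hx₀'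

lemma ftg_affine_eq {U : ℝ → ℝ} (hU : IsCDF U) (hnd : ∃ x, 0 < U x ∧ U x < 1)
    {α β : ℝ} (h0 : 0 < α) (hrel : ∀ y, U y = U (α * y + β)) : α = 1 ∧ β = 0 := by
  obtain ⟨hmono, hrc, hicc, hbot, htop⟩ := hU
  obtain ⟨x₀, hx₀, hx₀'⟩ := hnd
  rcases lt_trichotomy α 1 with hα | hα | hα
  · exact absurd hrel fun h => ftg_contract ⟨hmono, hrc, hicc, hbot, htop⟩ ⟨x₀, hx₀, hx₀'⟩ h0 hα h
  · subst hα
    refine ⟨rfl, ?_⟩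
    by_contra hβ
    have hiter : ∀ k : ℕ, ∀ y, U y = U (y + k * β) := by
      intro k
      induction k with
      | zero => intro y; norm_num
      | succ k ih =>
        intro y
        rw [ih y, hrel (y + k * β)]
        push_cast
        ring_nf
    rcases lt_or_gt_of_ne hβ with hβ' | hβ'
    · -- β < 0 : go to -∞, U x₀ = 0
      have hseq : Filter.Tendsto (fun k : ℕ => U (x₀ + k * β)) Filter.atTop (nhds 0) := by
        apply hbot.comp
        apply Filter.tendsto_atBot_add_const_left
        exact Filter.Tendsto.atTop_mul_const_of_neg hβ' tendsto_natCast_atTop_atTop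
      have := tendsto_nhds_unique ((tendsto_congr (fun k => (hiter k x₀).symm)).mp hseq)
        tendsto_const_nhds
      rw [← this] at hx₀; exact lt_irrefl 0 hx₀
    · have hseq : Filter.Tendsto (fun k : ℕ => U (x₀ + k * β)) Filter.atTop (nhds 1) := by
        apply htop.comp
        apply Filter.tendsto_atTop_add_const_left
        exact Filter.Tendsto.atTop_mul_const hβ' tendsto_natCast_atTop_atTop
      have := tendsto_nhds_unique ((tendsto_congr (fun k => (hiter k x₀).symm)).mp hseq)
        tendsto_const_nhds
      rw [← this] at hx₀'; exact lt_irrefl 1 hx₀'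
  · -- α > 1 : invert
    exfalso
    have hα0 : α ≠ 0 := by linarith
    have hrel' : ∀ z, U z = U (α⁻¹ * z + (-β/α)) := by
      intro z
      have := hrel ((z - β)/α)
      have harg : α * ((z - β)/α) + β = z := by field_simp; ring
      rw [harg] at this
      rw [← this]
      congr 1
      field_simp
      ring
    exact ftg_contract ⟨hmono, hrc, hicc, hbot, htop⟩ ⟨x₀, hx₀, hx₀'⟩
      (inv_pos.mpr h0) (by rw [inv_lt_one_iff₀]; right; exact hα) hrel'

lemma ftg_affine_unique {U : ℝ → ℝ} (hU : IsCDF U) (hnd : ∃ x, 0 < U x ∧ U x < 1)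
    {c d c' d' : ℝ} (hc : 0 < c) (hc' : 0 < c')
    (h : ∀ x, U (c * x + d) = U (c' * x + d')) : c = c' ∧ d = d' := by
  have hc0 : c ≠ 0 := ne_of_gt hc
  have hrel : ∀ y, U y = U ((c'/c) * y + (d' - c'/c * d)) := by
    intro y
    have := h ((y - d)/c)
    have h1 : c * ((y - d)/c) + d = y := by field_simp; ring
    have h2 : c' * ((y - d)/c) + d' = (c'/c) * y + (d' - c'/c * d) := by field_simp; ring
    rw [h1, h2] at this
    exact this
  obtain ⟨hα, hβ⟩ := ftg_affine_eq hU hnd (div_pos hc' hc) hrel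
  have hcc : c = c' := by
    field_simp at hα
    linarith
  refine ⟨hcc, ?_⟩
  rw [hα] at hβ
  linarith

lemma ftg_conv_types (G : ℕ → ℝ → ℝ) (hG : ∀ m, Monotone (G m))
    (U V : ℝ → ℝ) (hU : IsCDF U) (hV : IsCDF V)
    (hUnd : ∃ x, 0 < U x ∧ U x < 1) (hVnd : ∃ x, 0 < V x ∧ V x < 1)
    (E : Set ℝ) (hE : E.Countable)
    (γ : ℕ → ℝ) (hγ : ∀ m, 0 < γ m) (δ : ℕ → ℝ)
    (hGU : ∀ x, x ∉ E → Filter.Tendsto (fun m => G m x) Filter.atTop (nhds (U x)))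
    (hGV : ∀ x, x ∉ E →
      Filter.Tendsto (fun m => G m (γ m * x + δ m)) Filter.atTop (nhds (V x))) :
    ∃ c, 0 < c ∧ ∃ d, ∀ x, V x = U (c * x + d) := by
  obtain ⟨hUm, hUrc, hUicc, hUbot, hUtop⟩ := hU
  obtain ⟨hVm, hVrc, hVicc, hVbot, hVtop⟩ := hV
  set W : Set ℝ := E ∪ {x | ¬ContinuousAt U x} with hWdef
  have hW : W.Countable := hE.union hUm.countable_not_continuousAt
  have hWE : E ⊆ W := Set.subset_union_left
  -- pick p < q outside W with values of V in (0,1)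
  obtain ⟨x₀, hx₀0, hx₀1⟩ := hVnd
  have hmem : {y | V y < (1 + V x₀)/2} ∈ nhdsWithin x₀ (Set.Ici x₀) := by
    exact (hVrc x₀).tendsto.eventually (eventually_lt_nhds (by linarith))
  obtain ⟨u, hu, hus⟩ := (mem_nhdsGE_iff_exists_Ico_subset).mp hmem
  obtain ⟨p, hp, hpW⟩ := ftg_exists_notMem hW (show x₀ < u from hu)
  obtain ⟨q, hq, hqW⟩ := ftg_exists_notMem hW (show p < u from hp.2)
  have hpq : p < q := hq.1
  have hVp0 : 0 < V p := lt_of_lt_of_le hx₀0 (hVm hp.1.le)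
  have hVq1 : V q < 1 := by
    have : V q < (1 + V x₀)/2 := hus ⟨hp.1.le.trans hq.1.le, hq.2⟩
    linarith
  have hVpq : V p ≤ V q := hVm hpq.le
  -- pick A (low) and B (high) outside W
  obtain ⟨M, hM⟩ := eventually_atBot.mp (hUbot.eventually_lt_const hVp0)
  obtain ⟨A, hA, hAW⟩ := ftg_exists_notMem hW (show M - 1 < M by linarith)
  have hUA : U A < V p := hM A hA.2.le
  obtain ⟨N', hN'⟩ := eventually_atTop.mp (hUtop.eventually_const_lt hVq1)
  obtain ⟨B, hB, hBW⟩ := ftg_exists_notMem hW (show N' < N' + 1 by linarith)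
  have hUB : V q < U B := hN' B hB.1.le
  have hAB : A < B := by
    by_contra hcon
    push_neg at hcon
    have := hUm hcon
    linarith
  -- eventual bounds on (γ m, δ m)
  have ev1 : ∀ᶠ m in Filter.atTop, A < γ m * p + δ m := by
    have h1 := Filter.Tendsto.eventually_lt (hGU A (fun h => hAW (hWE h)))
      (hGV p (fun h => hpW (hWE h))) (by linarith)
    apply h1.mono
    intro m hm
    by_contra hcon
    push_neg at hcon
    exact absurd (hG m hcon) (not_le.mpr hm)
  have ev2 : ∀ᶠ m in Filter.atTop, γ m * q + δ m < B := by
    have h1 := Filter.Tendsto.eventually_lt (hGV q (fun h => hqW (hWE h)))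
      (hGU B (fun h => hBW (hWE h))) (by linarith)
    apply h1.mono
    intro m hm
    by_contra hcon
    push_neg at hcon
    exact absurd (hG m hcon) (not_le.mpr hm)
  set Γ : ℝ := (B - A)/(q - p) with hΓdef
  set K : Set (ℝ × ℝ) :=
    Set.Icc (0:ℝ) Γ ×ˢ Set.Icc (A - Γ * |p|) (B + Γ * |p|) with hKdef
  have evK : ∀ᶠ m in Filter.atTop, (γ m, δ m) ∈ K := by
    filter_upwards [ev1, ev2] with m h1 h2
    have hγm := hγ m
    have hord : γ m * p + δ m < γ m * q + δ m := by nlinarith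
    have hγΓ : γ m ≤ Γ := by
      rw [hΓdef, le_div_iff₀ (by linarith)]
      nlinarith
    have habs1 : γ m * p ≤ Γ * |p| := by
      calc γ m * p ≤ |γ m * p| := le_abs_self _
        _ = γ m * |p| := by rw [abs_mul, abs_of_pos hγm]
        _ ≤ Γ * |p| := by nlinarith [abs_nonneg p]
    have habs2 : -(Γ * |p|) ≤ γ m * p := by
      calc -(Γ * |p|) ≤ -(γ m * |p|) := by nlinarith [abs_nonneg p]
        _ ≤ -|γ m * p| := by rw [abs_mul, abs_of_pos hγm]
        _ ≤ γ m * p := neg_abs_le _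
    constructor
    · exact ⟨hγm.le, hγΓ⟩
    · constructor
      · nlinarith
      · nlinarith
  obtain ⟨N, hN⟩ := eventually_atTop.mp evK
  have hKcpt : IsCompact K := (isCompact_Icc).prod isCompact_Icc
  obtain ⟨⟨c, d⟩, hcdK, φ, hφ, hlim⟩ :=
    hKcpt.tendsto_subseq (x := fun k => (γ (k + N), δ (k + N)))
      (fun k => hN (k + N) (Nat.le_add_left N k))
  set ψ : ℕ → ℕ := fun k => φ k + N with hψdef
  have hψtop : Filter.Tendsto ψ Filter.atTop Filter.atTop := by
    apply Filter.tendsto_atTop_atTop.mpr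
    intro b
    exact ⟨b, fun a hab => le_trans (hab.trans (hφ.le_apply)) (Nat.le_add_right _ _)⟩
  have hγlim : Filter.Tendsto (fun k => γ (ψ k)) Filter.atTop (nhds c) :=
    (continuous_fst.tendsto _).comp hlim
  have hδlim : Filter.Tendsto (fun k => δ (ψ k)) Filter.atTop (nhds d) :=
    (continuous_snd.tendsto _).comp hlim
  have hargs : ∀ x : ℝ, Filter.Tendsto (fun k => γ (ψ k) * x + δ (ψ k))
      Filter.atTop (nhds (c * x + d)) := fun x => (hγlim.mul_const x).add hδlim
  have hc0 : 0 ≤ c := hcdK.1.1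
  -- one-sided comparison lemmas
  have hle : ∀ x, x ∉ E → ∀ s, s ∉ W → c * x + d < s → V x ≤ U s := by
    intro x hx s hs hlt
    have hev : ∀ᶠ k in Filter.atTop, γ (ψ k) * x + δ (ψ k) < s :=
      (hargs x).eventually_lt_const hlt
    have hsE : s ∉ E := fun h => hs (hWE h)
    refine le_of_tendsto_of_tendsto ((hGV x hx).comp hψtop) ((hGU s hsE).comp hψtop) ?_
    filter_upwards [hev] with k hk
    exact hG (ψ k) hk.le
  have hge : ∀ x, x ∉ E → ∀ s, s ∉ W → s < c * x + d → U s ≤ V x := by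
    intro x hx s hs hlt
    have hev : ∀ᶠ k in Filter.atTop, s < γ (ψ k) * x + δ (ψ k) :=
      (hargs x).eventually_const_lt hlt
    have hsE : s ∉ E := fun h => hs (hWE h)
    refine le_of_tendsto_of_tendsto ((hGU s hsE).comp hψtop) ((hGV x hx).comp hψtop) ?_
    filter_upwards [hev] with k hk
    exact hG (ψ k) hk.le
  -- c cannot be zero
  rcases eq_or_lt_of_le hc0 with hc | hc
  · exfalso
    have hfromE : ∀ n : ℕ, ∃ x, x ∈ Set.Ioo (n:ℝ) (n+1) ∧ x ∉ W :=
      fun n => ftg_exists_notMem hW (by linarith)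
    choose xs hxs hxsW using hfromE
    have hxstop : Filter.Tendsto xs Filter.atTop Filter.atTop :=
      tendsto_atTop_mono (fun n => (hxs n).1.le) tendsto_natCast_atTop_atTop
    have hfromE' : ∀ n : ℕ, ∃ x, x ∈ Set.Ioo (-(n:ℝ)-1) (-(n:ℝ)) ∧ x ∉ W :=
      fun n => ftg_exists_notMem hW (by linarith)
    choose ys hys hysW using hfromE'
    have hysbot : Filter.Tendsto ys Filter.atTop Filter.atBot := by
      apply tendsto_atBot_mono (fun n => (hys n).2.le)
      exact tendsto_neg_atBot_iff.mpr tendsto_natCast_atTop_atTop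
    have hypUp : ∀ y, d < y → 1 ≤ U y := by
      intro y hy
      obtain ⟨s, hsIoo, hsW⟩ := ftg_exists_notMem hW hy
      have h1 : ∀ n, V (xs n) ≤ U s := by
        intro n
        apply hle (xs n) (fun h => hxsW n (hWE h)) s hsW
        rw [← hc]
        simpa using hsIoo.1
      have h2 : (1:ℝ) ≤ U s :=
        le_of_tendsto (hVtop.comp hxstop) (Filter.Eventually.of_forall h1)
      exact h2.trans (hUm hsIoo.2.le)
    have hypDn : ∀ y, y < d → U y ≤ 0 := by
      intro y hy
      obtain ⟨s, hsIoo, hsW⟩ := ftg_exists_notMem hW hy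
      have h1 : ∀ n, U s ≤ V (ys n) := by
        intro n
        apply hge (ys n) (fun h => hysW n (hWE h)) s hsW
        rw [← hc]
        simpa using hsIoo.2
      have h2 : U s ≤ (0:ℝ) :=
        ge_of_tendsto (hVbot.comp hysbot) (Filter.Eventually.of_forall h1)
      exact (hUm hsIoo.1.le).trans h2
    obtain ⟨u₀, hu₀0, hu₀1⟩ := hUnd
    rcases lt_trichotomy u₀ d with h | h | h
    · linarith [hypDn u₀ h]
    · have hseq : Filter.Tendsto (fun k : ℕ => d + 1/(k+1:ℝ)) Filter.atTop (nhds d) := by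
        have := tendsto_one_div_add_atTop_nhds_zero_nat (𝕜 := ℝ)
        simpa using (tendsto_const_nhds (x := d)).add this
      have h2 := ftg_tendsto_right hUrc
        (fun k => by
          have : (0:ℝ) < 1/(k+1:ℝ) := by positivity
          linarith) hseq
      have h3 : (1:ℝ) ≤ U d := ge_of_tendsto h2 (Filter.Eventually.of_forall
        (fun k => hypUp _ (by
          have : (0:ℝ) < 1/(k+1:ℝ) := by positivity
          linarith)))
      rw [← h] at h3
      linarith
    · linarith [hypUp u₀ h]
  · -- main case : identify the limit
    have hcne : c ≠ 0 := ne_of_gt hc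
    have hinj : Function.Injective (fun x : ℝ => c * x + d) := by
      intro u v huv
      simp only at huv
      have : c * u = c * v := by linarith
      exact mul_left_cancel₀ hcne this
    set W2 : Set ℝ := W ∪ (fun x : ℝ => c * x + d) ⁻¹' W with hW2def
    have hW2 : W2.Countable := hW.union (hW.preimage hinj)
    have key : ∀ x, x ∉ W2 → V x = U (c * x + d) := by
      intro x hx
      have hxE : x ∉ E := fun h => hx (Set.mem_union_left _ (hWE h))
      have hxW : x ∉ W := fun h => hx (Set.mem_union_left _ h)
      have hcxd : (c * x + d) ∉ W := fun h => hx (Set.mem_union_right _ h)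
      have hUcont : ContinuousAt U (c * x + d) := by
        by_contra hcon
        exact hcxd (Set.mem_union_right _ hcon)
      apply le_antisymm
      · obtain ⟨s, hsW, hsgt, hstend⟩ := ftg_approx_right hW (c * x + d)
        have h1 : ∀ k, V x ≤ U (s k) := fun k => hle x hxE (s k) (hsW k) (hsgt k)
        have h2 : Filter.Tendsto (fun k => U (s k)) Filter.atTop (nhds (U (c * x + d))) :=
          ftg_tendsto_right hUrc (fun k => (hsgt k).le) hstend
        exact ge_of_tendsto h2 (Filter.Eventually.of_forall h1)
      · obtain ⟨s, hsW, hslt, hstend⟩ := ftg_approx_left hW (c * x + d)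
        have h1 : ∀ k, U (s k) ≤ V x := fun k => hge x hxE (s k) (hsW k) (hslt k)
        have h2 : Filter.Tendsto (fun k => U (s k)) Filter.atTop (nhds (U (c * x + d))) :=
          hUcont.tendsto.comp hstend
        exact le_of_tendsto h2 (Filter.Eventually.of_forall h1)
    refine ⟨c, hc, d, ?_⟩
    intro x
    obtain ⟨s, hsW2, hsgt, hstend⟩ := ftg_approx_right hW2 x
    have h1 : ∀ k, V (s k) = U (c * s k + d) := fun k => key (s k) (hsW2 k)
    have h2 : Filter.Tendsto (fun k => V (s k)) Filter.atTop (nhds (V x)) :=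
      ftg_tendsto_right hVrc (fun k => (hsgt k).le) hstend
    have h3 : Filter.Tendsto (fun k => U (c * s k + d)) Filter.atTop
        (nhds (U (c * x + d))) := by
      apply ftg_tendsto_right hUrc
      · intro k
        nlinarith [(hsgt k).le]
      · exact ((hstend.const_mul c).add_const d)
    exact tendsto_nhds_unique ((tendsto_congr h1).mp h2) h3

lemma ftg_pow_root {y z : ℝ} (hy : 0 ≤ y) {n : ℕ} (hn : 1 ≤ n) (h : z = y ^ n) :
    y = z ^ ((n:ℝ)⁻¹) := by
  have hn0 : (n:ℝ) ≠ 0 := by positivity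
  rw [h, ← Real.rpow_natCast y n, ← Real.rpow_mul hy, mul_inv_cancel₀ hn0, Real.rpow_one]

lemma ftg_case_gumbel (H : ℝ → ℝ) (hH : IsCDF H) (hnd : ∃ x, 0 < H x ∧ H x < 1)
    (d : ℕ → ℝ) (hd : ∀ n : ℕ, 1 ≤ n → ∀ x, H x = H (x + d n) ^ n) :
    ∃ a₀ > (0:ℝ), ∃ b₀ : ℝ, ∀ x, H x = Real.exp (-Real.exp (-(a₀*x+b₀))) := by
  obtain ⟨hHm, hHrc, hHicc, hHbot, hHtop⟩ := hH
  obtain ⟨x₀, hx₀0, hx₀1⟩ := hnd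
  have hH0 : ∀ x, 0 ≤ H x := fun x => (hHicc x).1
  have hH1 : ∀ x, H x ≤ 1 := fun x => (hHicc x).2
  have huniq : ∀ n : ℕ, 1 ≤ n → ∀ D D' : ℝ,
      (∀ x, H x = H (x + D) ^ n) → (∀ x, H x = H (x + D') ^ n) → D = D' := by
    intro n hn D D' h1 h2
    have hpt : ∀ x, H (1*x + D) = H (1*x + D') := by
      intro x
      have e1 := ftg_pow_root (hH0 (x + D)) hn (h1 x)
      have e2 := ftg_pow_root (hH0 (x + D')) hn (h2 x)
      rw [one_mul, e1, e2]
    exact (ftg_affine_unique ⟨hHm, hHrc, hHicc, hHbot, hHtop⟩ ⟨x₀, hx₀0, hx₀1⟩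
      one_pos one_pos hpt).2
  have hd1 : d 1 = 0 := by
    apply huniq 1 le_rfl (d 1) 0 (hd 1 le_rfl)
    intro x; rw [add_zero, pow_one]
  have hadd : ∀ m n : ℕ, 1 ≤ m → 1 ≤ n → d (m*n) = d m + d n := by
    intro m n hm hn
    have hmn1 : 1 ≤ m*n := Nat.one_le_iff_ne_zero.mpr (Nat.mul_ne_zero (by omega) (by omega))
    apply huniq (m*n) hmn1 _ _ (hd _ hmn1)
    intro x
    rw [show x + (d m + d n) = x + d m + d n by ring]
    rw [hd m hm x, hd n hn (x + d m), ← pow_mul, mul_comm n m]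
  have hroot : ∀ n : ℕ, 1 ≤ n → ∀ x, H (x + d n) = H x ^ ((n:ℝ)⁻¹) :=
    fun n hn x => ftg_pow_root (hH0 (x + d n)) hn (hd n hn x)
  have hstrict : ∀ m n : ℕ, 1 ≤ m → m < n → d m < d n := by
    intro m n hm hmn
    have h1 := hroot m hm x₀
    have h2 := hroot n (hm.trans hmn.le) x₀
    have hlt : H (x₀ + d m) < H (x₀ + d n) := by
      rw [h1, h2]
      apply Real.rpow_lt_rpow_of_exponent_gt hx₀0 hx₀1
      rw [inv_eq_one_div, inv_eq_one_div]
      apply one_div_lt_one_div_of_lt (by positivity)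
      exact_mod_cast hmn
    by_contra hcon
    push_neg at hcon
    exact absurd (hHm (by linarith : x₀ + d n ≤ x₀ + d m)) (not_le.mpr hlt)
  have hdmono : ∀ m n : ℕ, 1 ≤ m → m ≤ n → d m ≤ d n := by
    intro m n hm hmn
    rcases eq_or_lt_of_le hmn with h | h
    · rw [h]
    · exact (hstrict m n hm h).le
  have hlog := ftg_loglem d hadd hdmono
  have hln2 : 0 < Real.log 2 := Real.log_pos (by norm_num)
  have hd2 : 0 < d 2 := by
    have := hstrict 1 2 le_rfl one_lt_two
    rwa [hd1] at this
  set τ : ℝ := d 2 / Real.log 2 with hτdef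
  have hτ : 0 < τ := div_pos hd2 hln2
  have hdlog : ∀ n : ℕ, 1 ≤ n → d n = τ * Real.log n := by
    intro n hn
    have := hlog n hn
    rw [hτdef]
    field_simp
    linarith
  have hdbig : ∀ w : ℝ, ∃ n : ℕ, 1 ≤ n ∧ w ≤ d n := by
    intro w
    obtain ⟨k, hk⟩ := exists_nat_gt (Real.exp (w / τ))
    have hk1 : 1 ≤ k := by
      by_contra hcon
      push_neg at hcon
      interval_cases k
      · simp at hk
        linarith [Real.exp_pos (w/τ)]
    refine ⟨k, hk1, ?_⟩
    rw [hdlog k hk1]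
    have h1 : w / τ ≤ Real.log k := by
      have h2 : Real.log (Real.exp (w/τ)) ≤ Real.log k :=
        (Real.log_le_log_iff (Real.exp_pos _) (by exact_mod_cast hk1)).mpr hk.le
      rwa [Real.log_exp] at h2
    calc w = τ * (w / τ) := by field_simp
      _ ≤ τ * Real.log k := by nlinarith
  have hpos : ∀ x, 0 < H x := by
    intro z
    rcases lt_or_ge 0 (H z) with h | h
    · exact h
    exfalso
    have hz0 : H z = 0 := le_antisymm h (hH0 z)
    have hev : ∀ᶠ y in Filter.atTop, (1:ℝ)/2 < H y :=
      hHtop.eventually_const_lt (by norm_num)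
    obtain ⟨w, hw⟩ := eventually_atTop.mp hev
    obtain ⟨n, hn1, hnw⟩ := hdbig (w - z)
    have h1 : H (z + d n) = 0 := by
      rw [hroot n hn1 z, hz0, Real.zero_rpow (by positivity)]
    have h2 := hw (z + d n) (by linarith)
    linarith
  have hlt1 : ∀ x, H x < 1 := by
    intro z
    rcases lt_or_ge (H z) 1 with h | h
    · exact h
    exfalso
    have hz1 : H z = 1 := le_antisymm (hH1 z) h
    have hev : ∀ᶠ y in Filter.atBot, H y < 1/2 :=
      hHbot.eventually_lt_const (by norm_num)
    obtain ⟨w, hw⟩ := eventually_atBot.mp hev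
    obtain ⟨n, hn1, hnw⟩ := hdbig (z - w)
    have h1 : H (z - d n) = 1 := by
      have h3 := hd n hn1 (z - d n)
      rw [sub_add_cancel, hz1, one_pow] at h3
      exact h3
    have h2 := hw (z - d n) (by linarith)
    linarith
  set K : ℝ → ℝ := fun x => -Real.log (H x) with hKdef
  have hKpos : ∀ x, 0 < K x := by
    intro x
    have := Real.log_neg (hpos x) (hlt1 x)
    simp only [hKdef]
    linarith
  have hKanti : ∀ x y : ℝ, x ≤ y → K y ≤ K x := by
    intro x y hxy
    have := (Real.log_le_log_iff (hpos x) (hpos y)).mpr (hHm hxy)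
    simp only [hKdef]
    linarith
  have hKrel : ∀ n : ℕ, 1 ≤ n → ∀ x, K (x + d n) = K x / n := by
    intro n hn x
    have h := hd n hn x
    have h2 : Real.log (H x) = n * Real.log (H (x + d n)) := by
      rw [h, Real.log_pow]
    have hn0 : (n:ℝ) ≠ 0 := by positivity
    simp only [hKdef]
    field_simp
    linarith
  have hKrel2 : ∀ n : ℕ, 1 ≤ n → ∀ x, K (x - d n) = n * K x := by
    intro n hn x
    have h := hKrel n hn (x - d n)
    rw [sub_add_cancel] at h
    have hn0 : (n:ℝ) ≠ 0 := by positivity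
    field_simp at h
    linarith
  have hKq : ∀ m n : ℕ, 1 ≤ m → 1 ≤ n → ∀ x,
      K (x + (d m - d n)) = ((n:ℝ)/m) * K x := by
    intro m n hm hn x
    have h1 := hKrel2 n hn x
    have h2 := hKrel m hm (x - d n)
    rw [show x - d n + d m = x + (d m - d n) by ring] at h2
    rw [h2, h1]
    ring
  have hmain : ∀ x s : ℝ, K x = Real.exp s * K (x + τ * s) := by
    intro x s
    have hq1 : ∀ m n : ℕ, 0 < m → 0 < n → Real.exp s < (m:ℝ)/n →
        K x ≤ ((m:ℝ)/n) * K (x + τ * s) := by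
      intro m n hm hn hq
      have hmr : (0:ℝ) < m := by exact_mod_cast hm
      have hnr : (0:ℝ) < n := by exact_mod_cast hn
      have hlog : s < Real.log ((m:ℝ)/n) := by
        rw [Real.lt_log_iff_exp_lt (by positivity)]
        exact hq
      have hlogd : Real.log ((m:ℝ)/n) = Real.log m - Real.log n :=
        Real.log_div (ne_of_gt hmr) (ne_of_gt hnr)
      have harg : x + τ * s ≤ x + (d m - d n) := by
        rw [hdlog m hm, hdlog n hn]
        nlinarith
      have h3 := hKanti _ _ harg
      rw [hKq m n hm hn x] at h3
      calc K x = ((m:ℝ)/n) * (((n:ℝ)/m) * K x) := by field_simp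
        _ ≤ ((m:ℝ)/n) * K (x + τ * s) :=
          mul_le_mul_of_nonneg_left h3 (by positivity)
    have hq2 : ∀ m n : ℕ, 0 < m → 0 < n → (m:ℝ)/n < Real.exp s →
        ((m:ℝ)/n) * K (x + τ * s) ≤ K x := by
      intro m n hm hn hq
      have hmr : (0:ℝ) < m := by exact_mod_cast hm
      have hnr : (0:ℝ) < n := by exact_mod_cast hn
      have hlog : Real.log ((m:ℝ)/n) < s := by
        rw [Real.log_lt_iff_lt_exp (by positivity)]
        exact hq
      have hlogd : Real.log ((m:ℝ)/n) = Real.log m - Real.log n :=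
        Real.log_div (ne_of_gt hmr) (ne_of_gt hnr)
      have harg : x + (d m - d n) ≤ x + τ * s := by
        rw [hdlog m hm, hdlog n hn]
        nlinarith
      have h3 := hKanti _ _ harg
      rw [hKq m n hm hn x] at h3
      calc ((m:ℝ)/n) * K (x + τ * s) ≤ ((m:ℝ)/n) * (((n:ℝ)/m) * K x) :=
          mul_le_mul_of_nonneg_left h3 (by positivity)
        _ = K x := by field_simp
    exact ftg_squeeze (Real.exp_pos s) (hKpos x) (hKpos _) hq1 hq2
  refine ⟨1/τ, by positivity, -Real.log (K 0), ?_⟩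
  intro x
  have h1 := hmain 0 (x / τ)
  rw [show (0:ℝ) + τ * (x/τ) = x by field_simp; ring] at h1
  have hKx : K x = Real.exp (-((1/τ)*x + -Real.log (K 0))) := by
    rw [show -((1/τ)*x + -Real.log (K 0)) = Real.log (K 0) + -(x/τ) by
      field_simp; ring]
    rw [Real.exp_add, Real.exp_log (hKpos 0), h1, Real.exp_neg]
    field_simp
  have h2 : H x = Real.exp (-(K x)) := by
    simp only [hKdef, neg_neg]
    exact (Real.exp_log (hpos x)).symm
  rw [h2, hKx]

lemma ftg_exists_npow {θ : ℝ} (hθ : 0 < θ) (w : ℝ) :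
    ∃ n : ℕ, 1 ≤ n ∧ w ≤ (n:ℝ)^θ := by
  rcases le_or_gt w 1 with h | h
  · exact ⟨1, le_rfl, by rw [Nat.cast_one, Real.one_rpow]; exact h⟩
  · have hw0 : (0:ℝ) < w := by linarith
    obtain ⟨k, hk⟩ := exists_nat_gt (w ^ (θ⁻¹))
    have h1 : (1:ℝ) < w ^ (θ⁻¹) :=
      (Real.one_lt_rpow_iff_of_pos hw0).mpr (Or.inl ⟨h, by positivity⟩)
    have hk1 : 1 ≤ k := by
      by_contra hcon
      push_neg at hcon
      interval_cases k
      simp at hk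
      linarith
    refine ⟨k, hk1, ?_⟩
    calc w = w ^ ((θ⁻¹) * θ) := by
          rw [inv_mul_cancel₀ (ne_of_gt hθ), Real.rpow_one]
      _ = (w ^ (θ⁻¹)) ^ θ := Real.rpow_mul hw0.le _ _
      _ ≤ (k:ℝ) ^ θ := Real.rpow_le_rpow (by positivity) hk.le hθ.le

lemma ftg_tendsto_rpow_inv {b : ℝ} (hb : 0 < b) :
    Filter.Tendsto (fun n : ℕ => b ^ ((n:ℝ)⁻¹)) Filter.atTop (nhds 1) := by
  have h1 : ∀ n : ℕ, b ^ ((n:ℝ)⁻¹) = Real.exp (Real.log b * (n:ℝ)⁻¹) := by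
    intro n
    rw [Real.rpow_def_of_pos hb]
  rw [funext h1]
  have h2 : Filter.Tendsto (fun n : ℕ => Real.log b * (n:ℝ)⁻¹) Filter.atTop (nhds 0) := by
    have h3 : Filter.Tendsto (fun n : ℕ => ((n:ℝ))⁻¹) Filter.atTop (nhds 0) :=
      tendsto_inv_atTop_zero.comp tendsto_natCast_atTop_atTop
    simpa using (tendsto_const_nhds (x := Real.log b)).mul h3
  have := (Real.continuous_exp.tendsto 0).comp h2
  rw [Real.exp_zero] at this
  exact this

lemma ftg_case_frechet (G : ℝ → ℝ) (hG : IsCDF G) (x₁ : ℝ) (hx₁ : 0 < x₁)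
    (h0 : 0 < G x₁) (h1 : G x₁ < 1) {θ : ℝ} (hθ : 0 < θ)
    (heq : ∀ n : ℕ, 1 ≤ n → ∀ x, G x = G ((n:ℝ)^θ * x) ^ n) :
    ∃ ξ > (0:ℝ), ∃ A > (0:ℝ),
      (∀ t, t ≤ 0 → G t = 0) ∧ (∀ t, 0 < t → G t = Real.exp (-(A*t) ^ (-ξ))) := by
  obtain ⟨hGm, hGrc, hGicc, hGbot, hGtop⟩ := hG
  have hG0 : ∀ x, 0 ≤ G x := fun x => (hGicc x).1
  have hG1 : ∀ x, G x ≤ 1 := fun x => (hGicc x).2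
  have hnpow : ∀ n : ℕ, 1 ≤ n → (0:ℝ) < (n:ℝ)^θ := by
    intro n hn
    apply Real.rpow_pos_of_pos
    exact_mod_cast hn
  -- value at scaled-down points
  have hdown : ∀ n : ℕ, 1 ≤ n → G (x₁ * ((n:ℝ)^θ)⁻¹) = G x₁ ^ n := by
    intro n hn
    have := heq n hn (x₁ * ((n:ℝ)^θ)⁻¹)
    rwa [show (n:ℝ)^θ * (x₁ * ((n:ℝ)^θ)⁻¹) = x₁ by
      field_simp] at this
  -- G vanishes on (-∞, 0]
  have hzero : ∀ t, t ≤ 0 → G t = 0 := by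
    intro t ht
    have h2 : ∀ n : ℕ, 1 ≤ n → G t ≤ G x₁ ^ n := by
      intro n hn
      rw [← hdown n hn]
      apply hGm
      have := hnpow n hn
      have : 0 < x₁ * ((n:ℝ)^θ)⁻¹ := by positivity
      linarith
    have h3 : Filter.Tendsto (fun n : ℕ => G x₁ ^ n) Filter.atTop (nhds 0) :=
      tendsto_pow_atTop_nhds_zero_of_lt_one (hG0 x₁) h1
    have h4 : G t ≤ 0 := ge_of_tendsto h3 (eventually_atTop.mpr ⟨1, fun n hn => h2 n hn⟩)
    exact le_antisymm h4 (hG0 t)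
  -- positivity on (0, ∞)
  have hpos : ∀ t, 0 < t → 0 < G t := by
    intro t ht
    obtain ⟨n, hn1, hn2⟩ := ftg_exists_npow hθ (x₁ / t)
    have hnp := hnpow n hn1
    have harg : x₁ * ((n:ℝ)^θ)⁻¹ ≤ t := by
      rw [mul_inv_le_iff₀ hnp]
      have h6 := (div_le_iff₀ ht).mp hn2
      nlinarith
    calc (0:ℝ) < G x₁ ^ n := pow_pos h0 n
      _ = G (x₁ * ((n:ℝ)^θ)⁻¹) := (hdown n hn1).symm
      _ ≤ G t := hGm harg
  -- below 1 on (0, ∞)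
  have hlt1 : ∀ t, 0 < t → G t < 1 := by
    intro t ht
    rcases lt_or_ge (G t) 1 with h | h
    · exact h
    exfalso
    have hz1 : G t = 1 := le_antisymm (hG1 t) h
    obtain ⟨n, hn1, hn2⟩ := ftg_exists_npow hθ (t / x₁)
    have hnp := hnpow n hn1
    have harg : t * ((n:ℝ)^θ)⁻¹ ≤ x₁ := by
      rw [mul_inv_le_iff₀ hnp]
      have h6 := (div_le_iff₀ hx₁).mp hn2
      nlinarith
    have hdz : G (t * ((n:ℝ)^θ)⁻¹) = G t ^ n := by
      have := heq n hn1 (t * ((n:ℝ)^θ)⁻¹)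
      rwa [show (n:ℝ)^θ * (t * ((n:ℝ)^θ)⁻¹) = t by field_simp] at this
    rw [hz1, one_pow] at hdz
    have := hGm harg
    rw [hdz] at this
    linarith
  -- the function K
  set K : ℝ → ℝ := fun t => -Real.log (G t) with hKdef
  have hKpos : ∀ t, 0 < t → 0 < K t := by
    intro t ht
    have := Real.log_neg (hpos t ht) (hlt1 t ht)
    simp only [hKdef]
    linarith
  have hKanti : ∀ s t : ℝ, 0 < s → s ≤ t → K t ≤ K s := by
    intro s t hs hst
    have := (Real.log_le_log_iff (hpos s hs) (hpos t (lt_of_lt_of_le hs hst))).mpr (hGm hst)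
    simp only [hKdef]
    linarith
  have hK : ∀ n : ℕ, 1 ≤ n → ∀ t, K ((n:ℝ)^θ * t) = K t / n := by
    intro n hn t
    have h := heq n hn t
    have h2 : Real.log (G t) = n * Real.log (G ((n:ℝ)^θ * t)) := by
      rw [h, Real.log_pow]
    have hn0 : (n:ℝ) ≠ 0 := by positivity
    simp only [hKdef]
    field_simp
    linarith
  have hK2 : ∀ n : ℕ, 1 ≤ n → ∀ t, K (((n:ℝ)^θ)⁻¹ * t) = n * K t := by
    intro n hn t
    have hnp := hnpow n hn
    have h := hK n hn (((n:ℝ)^θ)⁻¹ * t)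
    rw [show (n:ℝ)^θ * (((n:ℝ)^θ)⁻¹ * t) = t by field_simp] at h
    have hn0 : (n:ℝ) ≠ 0 := by positivity
    rw [eq_div_iff hn0] at h
    linarith
  have hKq : ∀ m n : ℕ, 1 ≤ m → 1 ≤ n → ∀ t,
      K (((m:ℝ)/n)^θ * t) = ((n:ℝ)/m) * K t := by
    intro m n hm hn t
    have hmr : (0:ℝ) < m := by exact_mod_cast hm
    have hnr : (0:ℝ) < n := by exact_mod_cast hn
    have hsplit : ((m:ℝ)/n)^θ = (m:ℝ)^θ * (((n:ℝ)^θ)⁻¹) := by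
      rw [Real.div_rpow hmr.le hnr.le]
      ring
    rw [hsplit, mul_assoc, hK m hm, hK2 n hn]
    ring
  -- scaling identity
  have hscale : ∀ l t : ℝ, 0 < l → 0 < t → K t = l ^ (θ⁻¹) * K (l * t) := by
    intro l t hl ht
    have hlt0 : 0 < l * t := by positivity
    have hg : (0:ℝ) < l ^ (θ⁻¹) := Real.rpow_pos_of_pos hl _
    apply ftg_squeeze hg (hKpos t ht) (hKpos _ hlt0)
    · intro m n hm hn hq
      have hmr : (0:ℝ) < m := by exact_mod_cast hm
      have hnr : (0:ℝ) < n := by exact_mod_cast hn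
      have hqθ : l < ((m:ℝ)/n) ^ θ := by
        calc l = (l ^ (θ⁻¹)) ^ θ := by
              rw [← Real.rpow_mul hl.le, inv_mul_cancel₀ (ne_of_gt hθ), Real.rpow_one]
          _ < ((m:ℝ)/n) ^ θ := Real.rpow_lt_rpow (by positivity) hq hθ
      have harg : l * t ≤ ((m:ℝ)/n)^θ * t := by nlinarith
      have h3 := hKanti _ _ hlt0 harg
      rw [hKq m n hm hn t] at h3
      calc K t = ((m:ℝ)/n) * (((n:ℝ)/m) * K t) := by field_simp
        _ ≤ ((m:ℝ)/n) * K (l * t) := mul_le_mul_of_nonneg_left h3 (by positivity)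
    · intro m n hm hn hq
      have hmr : (0:ℝ) < m := by exact_mod_cast hm
      have hnr : (0:ℝ) < n := by exact_mod_cast hn
      have hqθ : ((m:ℝ)/n) ^ θ < l := by
        calc ((m:ℝ)/n) ^ θ < (l ^ (θ⁻¹)) ^ θ := Real.rpow_lt_rpow (by positivity) hq hθ
          _ = l := by
              rw [← Real.rpow_mul hl.le, inv_mul_cancel₀ (ne_of_gt hθ), Real.rpow_one]
      have hqt0 : (0:ℝ) < ((m:ℝ)/n)^θ * t := by
        have := Real.rpow_pos_of_pos (show (0:ℝ) < (m:ℝ)/n by positivity) θ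
        positivity
      have harg : ((m:ℝ)/n)^θ * t ≤ l * t := by nlinarith
      have h3 := hKanti _ _ hqt0 harg
      rw [hKq m n hm hn t] at h3
      calc ((m:ℝ)/n) * K (l * t) ≤ ((m:ℝ)/n) * (((n:ℝ)/m) * K t) :=
          mul_le_mul_of_nonneg_left h3 (by positivity)
        _ = K t := by field_simp
  -- closed form of K
  have hKform : ∀ t : ℝ, 0 < t → K t = K 1 * t ^ (-(θ⁻¹)) := by
    intro t ht
    have := hscale t 1 ht one_pos
    rw [mul_one] at this
    have htp : (0:ℝ) < t ^ (θ⁻¹) := Real.rpow_pos_of_pos ht _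
    rw [Real.rpow_neg ht.le, this, mul_comm (t ^ θ⁻¹) (K t), mul_assoc,
      mul_inv_cancel₀ (ne_of_gt htp), mul_one]
  have hK1 : 0 < K 1 := hKpos 1 one_pos
  refine ⟨θ⁻¹, by positivity, (K 1) ^ (-θ), Real.rpow_pos_of_pos hK1 _, hzero, ?_⟩
  intro t ht
  have hrw : (((K 1) ^ (-θ)) * t) ^ (-(θ⁻¹)) = K t := by
    rw [Real.mul_rpow (Real.rpow_pos_of_pos hK1 _).le ht.le]
    rw [← Real.rpow_mul hK1.le]
    rw [show (-θ) * (-(θ⁻¹)) = 1 by field_simp, Real.rpow_one]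
    rw [← hKform t ht]
  rw [hrw]
  simp only [hKdef, neg_neg]
  exact (Real.exp_log (hpos t ht)).symm

lemma ftg_case_weibull (G : ℝ → ℝ) (hG : IsCDF G) (x₁ : ℝ) (hx₁ : x₁ < 0)
    (h0 : 0 < G x₁) (h1 : G x₁ < 1) {θ : ℝ} (hθ : 0 < θ)
    (heq : ∀ n : ℕ, 1 ≤ n → ∀ x, G x = G ((n:ℝ)^(-θ) * x) ^ n) :
    ∃ ξ > (0:ℝ), ∃ A > (0:ℝ),
      (∀ t, t ≤ 0 → G t = Real.exp (-(-(A*t)) ^ ξ)) ∧ (∀ t, 0 < t → G t = 1) := by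
  obtain ⟨hGm, hGrc, hGicc, hGbot, hGtop⟩ := hG
  have hG0 : ∀ x, 0 ≤ G x := fun x => (hGicc x).1
  have hG1 : ∀ x, G x ≤ 1 := fun x => (hGicc x).2
  have hnpow : ∀ n : ℕ, 1 ≤ n → (0:ℝ) < (n:ℝ)^θ := by
    intro n hn
    apply Real.rpow_pos_of_pos
    exact_mod_cast hn
  have hneg : ∀ n : ℕ, 1 ≤ n → (n:ℝ)^(-θ) = ((n:ℝ)^θ)⁻¹ := by
    intro n hn
    rw [Real.rpow_neg (by positivity)]
  -- scaled-up points
  have hup : ∀ n : ℕ, 1 ≤ n → ∀ x : ℝ, G ((n:ℝ)^θ * x) = G x ^ n := by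
    intro n hn x
    have := heq n hn ((n:ℝ)^θ * x)
    rwa [hneg n hn, show ((n:ℝ)^θ)⁻¹ * ((n:ℝ)^θ * x) = x by
      field_simp] at this
  -- G = 1 on [0, ∞)
  have hone : ∀ t, 0 ≤ t → G t = 1 := by
    intro t ht
    have hroot : ∀ n : ℕ, 1 ≤ n → G ((n:ℝ)^(-θ) * x₁) = G x₁ ^ ((n:ℝ)⁻¹) := by
      intro n hn
      exact ftg_pow_root (hG0 _) hn (heq n hn x₁)
    have h2 : ∀ n : ℕ, 1 ≤ n → G x₁ ^ ((n:ℝ)⁻¹) ≤ G t := by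
      intro n hn
      rw [← hroot n hn]
      apply hGm
      rw [hneg n hn]
      have := hnpow n hn
      nlinarith [inv_pos.mpr (hnpow n hn)]
    have h3 := ftg_tendsto_rpow_inv h0
    have h4 : (1:ℝ) ≤ G t :=
      le_of_tendsto h3 (eventually_atTop.mpr ⟨1, fun n hn => h2 n hn⟩)
    exact le_antisymm (hG1 t) h4
  -- positivity everywhere
  have hpos : ∀ x : ℝ, 0 < G x := by
    intro x
    obtain ⟨n, hn1, hn2⟩ := ftg_exists_npow hθ ((-x) / (-x₁))
    have hnp := hnpow n hn1
    have harg : (n:ℝ)^θ * x₁ ≤ x := by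
      have hx₁' : (0:ℝ) < -x₁ := by linarith
      have h5 : -x ≤ (n:ℝ)^θ * (-x₁) := (div_le_iff₀ hx₁').mp hn2
      linarith
    calc (0:ℝ) < G x₁ ^ n := pow_pos h0 n
      _ = G ((n:ℝ)^θ * x₁) := (hup n hn1 x₁).symm
      _ ≤ G x := hGm harg
  -- below 1 on (-∞, 0)
  have hlt1 : ∀ t, t < 0 → G t < 1 := by
    intro t ht
    rcases lt_or_ge (G t) 1 with h | h
    · exact h
    exfalso
    have hz1 : G t = 1 := le_antisymm (hG1 t) h
    have hev : ∀ᶠ y in Filter.atBot, G y < 1/2 := hGbot.eventually_lt_const (by norm_num)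
    obtain ⟨w, hw⟩ := eventually_atBot.mp hev
    obtain ⟨n, hn1, hn2⟩ := ftg_exists_npow hθ ((-w) / (-t))
    have hnp := hnpow n hn1
    have harg : (n:ℝ)^θ * t ≤ w := by
      have ht' : (0:ℝ) < -t := by linarith
      have h5 : -w ≤ (n:ℝ)^θ * (-t) := (div_le_iff₀ ht').mp hn2
      linarith
    have h6 := hup n hn1 t
    rw [hz1, one_pow] at h6
    have := hw ((n:ℝ)^θ * t) harg
    linarith
  -- the function L
  set L : ℝ → ℝ := fun t => -Real.log (G (-t)) with hLdef
  have hLpos : ∀ t, 0 < t → 0 < L t := by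
    intro t ht
    have := Real.log_neg (hpos (-t)) (hlt1 (-t) (by linarith))
    simp only [hLdef]
    linarith
  have hLmono : ∀ s t : ℝ, s ≤ t → L s ≤ L t := by
    intro s t hst
    have := (Real.log_le_log_iff (hpos (-t)) (hpos (-s))).mpr (hGm (by linarith))
    simp only [hLdef]
    linarith
  have hL : ∀ n : ℕ, 1 ≤ n → ∀ t, L ((n:ℝ)^θ * t) = n * L t := by
    intro n hn t
    have h := heq n hn (-((n:ℝ)^θ * t))
    rw [hneg n hn, show ((n:ℝ)^θ)⁻¹ * -((n:ℝ)^θ * t) = -t by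
      have hnp := hnpow n hn
      field_simp] at h
    have h2 : Real.log (G (-((n:ℝ)^θ * t))) = n * Real.log (G (-t)) := by
      rw [h, Real.log_pow]
    simp only [hLdef]
    linarith
  have hL2 : ∀ n : ℕ, 1 ≤ n → ∀ t, L (((n:ℝ)^θ)⁻¹ * t) = L t / n := by
    intro n hn t
    have hnp := hnpow n hn
    have h := hL n hn (((n:ℝ)^θ)⁻¹ * t)
    rw [show (n:ℝ)^θ * (((n:ℝ)^θ)⁻¹ * t) = t by field_simp] at h
    have hn0 : (n:ℝ) ≠ 0 := by positivity
    rw [eq_div_iff hn0]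
    linarith
  have hLq : ∀ m n : ℕ, 1 ≤ m → 1 ≤ n → ∀ t,
      L (((m:ℝ)/n)^θ * t) = ((m:ℝ)/n) * L t := by
    intro m n hm hn t
    have hmr : (0:ℝ) < m := by exact_mod_cast hm
    have hnr : (0:ℝ) < n := by exact_mod_cast hn
    have hsplit : ((m:ℝ)/n)^θ = (m:ℝ)^θ * (((n:ℝ)^θ)⁻¹) := by
      rw [Real.div_rpow hmr.le hnr.le]
      ring
    rw [hsplit, mul_assoc, hL m hm, hL2 n hn]
    ring
  -- scaling identity
  have hscale : ∀ l t : ℝ, 0 < l → 0 < t → L (l * t) = l ^ (θ⁻¹) * L t := by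
    intro l t hl ht
    have hlt0 : 0 < l * t := by positivity
    have hg : (0:ℝ) < l ^ (θ⁻¹) := Real.rpow_pos_of_pos hl _
    apply ftg_squeeze hg (hLpos _ hlt0) (hLpos t ht)
    · intro m n hm hn hq
      have hmr : (0:ℝ) < m := by exact_mod_cast hm
      have hnr : (0:ℝ) < n := by exact_mod_cast hn
      have hqθ : l < ((m:ℝ)/n) ^ θ := by
        calc l = (l ^ (θ⁻¹)) ^ θ := by
              rw [← Real.rpow_mul hl.le, inv_mul_cancel₀ (ne_of_gt hθ), Real.rpow_one]
          _ < ((m:ℝ)/n) ^ θ := Real.rpow_lt_rpow (by positivity) hq hθ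
      have harg : l * t ≤ ((m:ℝ)/n)^θ * t := by nlinarith
      have h3 := hLmono _ _ harg
      rw [hLq m n hm hn t] at h3
      exact h3
    · intro m n hm hn hq
      have hmr : (0:ℝ) < m := by exact_mod_cast hm
      have hnr : (0:ℝ) < n := by exact_mod_cast hn
      have hqθ : ((m:ℝ)/n) ^ θ < l := by
        calc ((m:ℝ)/n) ^ θ < (l ^ (θ⁻¹)) ^ θ := Real.rpow_lt_rpow (by positivity) hq hθ
          _ = l := by
              rw [← Real.rpow_mul hl.le, inv_mul_cancel₀ (ne_of_gt hθ), Real.rpow_one]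
      have harg : ((m:ℝ)/n)^θ * t ≤ l * t := by nlinarith
      have h3 := hLmono _ _ harg
      rw [hLq m n hm hn t] at h3
      exact h3
  have hLform : ∀ t : ℝ, 0 < t → L t = L 1 * t ^ (θ⁻¹) := by
    intro t ht
    have := hscale t 1 ht one_pos
    rw [mul_one] at this
    linarith [this]
  have hL1 : 0 < L 1 := hLpos 1 one_pos
  refine ⟨θ⁻¹, by positivity, (L 1) ^ θ, Real.rpow_pos_of_pos hL1 _, ?_, fun t ht => hone t ht.le⟩
  intro t ht
  rcases eq_or_lt_of_le ht with h | h
  · -- t = 0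
    rw [h, mul_zero, neg_zero,
      Real.zero_rpow (by positivity), neg_zero, Real.exp_zero]
    exact hone 0 le_rfl
  · -- t < 0
    have hmt : 0 < -t := by linarith
    have hrw : (-(((L 1) ^ θ) * t)) ^ (θ⁻¹) = L (-t) := by
      rw [show -(((L 1) ^ θ) * t) = ((L 1) ^ θ) * (-t) by ring]
      rw [Real.mul_rpow (Real.rpow_pos_of_pos hL1 _).le hmt.le]
      rw [← Real.rpow_mul hL1.le]
      rw [show θ * θ⁻¹ = 1 by field_simp, Real.rpow_one]
      rw [hLform (-t) hmt]
    rw [hrw]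
    have : G t = Real.exp (-(L (-t))) := by
      simp only [hLdef, neg_neg]
      exact (Real.exp_log (hpos t)).symm
    rw [this]

set_option maxHeartbeats 2000000 in
/-- **Fisher–Tippett–Gnedenko trichotomy.** If for some normalizing sequences
`a m > 0`, `b m` the normalized maxima distributions `F (x / a m + b m) ^ m`
converge (at continuity points) to a nondegenerate cdf `H`, then up to an affine
change of variables `H` is of Gumbel, Fréchet or Weibull type. -/
theorem fisher_tippett_gnedenko
    (F : ℝ → ℝ) (hF : IsCDF F)
    (a : ℕ → ℝ) (ha : ∀ m, 0 < a m) (b : ℕ → ℝ)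
    (H : ℝ → ℝ) (hH : IsCDF H)
    (hnondeg : ∃ x, 0 < H x ∧ H x < 1)
    (hconv : ∀ x, ContinuousAt H x →
      Filter.Tendsto (fun m : ℕ => (F (x / a m + b m)) ^ m) Filter.atTop (nhds (H x))) :
    ∃ a₀ > (0 : ℝ), ∃ b₀ : ℝ,
      -- Type 1 (Gumbel)
      (∀ x : ℝ, H x = Real.exp (-Real.exp (-(a₀ * x + b₀)))) ∨
      -- Type 2 (Fréchet)
      (∃ ξ > (0 : ℝ), ∀ x : ℝ,
        (a₀ * x + b₀ ≤ 0 → H x = 0) ∧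
        (0 < a₀ * x + b₀ → H x = Real.exp (-(a₀ * x + b₀) ^ (-ξ)))) ∨
      -- Type 3 (Weibull)
      (∃ ξ > (0 : ℝ), ∀ x : ℝ,
        (a₀ * x + b₀ ≤ 0 → H x = Real.exp (-(-(a₀ * x + b₀)) ^ ξ)) ∧
        (0 < a₀ * x + b₀ → H x = 1)) := by
  obtain ⟨x₀, hx₀0, hx₀1⟩ := hnondeg
  have hH0 : ∀ x, 0 ≤ H x := fun x => (hH.2.2.1 x).1
  have hH1 : ∀ x, H x ≤ 1 := fun x => (hH.2.2.1 x).2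
  have hF0 : ∀ x, 0 ≤ F x := fun x => (hF.2.2.1 x).1
  -- Step 1 : max-stability via convergence of types
  have key : ∀ n : ℕ, 1 ≤ n → ∃ c d : ℝ, 0 < c ∧ ∀ x, H x = H (c*x+d)^n := by
    intro n hn
    have hn0 : n ≠ 0 := by omega
    have hUcdf : IsCDF (fun x => H x ^ n) := by
      refine ⟨?_, ?_, ?_, ?_, ?_⟩
      · intro x y hxy
        exact pow_le_pow_left₀ (hH0 x) (hH.1 hxy) n
      · intro x
        exact (hH.2.1 x).pow n
      · intro x
        exact ⟨pow_nonneg (hH0 x) n, pow_le_one₀ (hH0 x) (hH1 x)⟩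
      · have := hH.2.2.2.1.pow n
        simpa [zero_pow hn0] using this
      · have := hH.2.2.2.2.pow n
        simpa using this
    have hUnd : ∃ x, 0 < H x ^ n ∧ H x ^ n < 1 :=
      ⟨x₀, pow_pos hx₀0 n, pow_lt_one₀ (hH0 x₀) hx₀1 hn0⟩
    have hmuln : Filter.Tendsto (fun m : ℕ => m * n) Filter.atTop Filter.atTop := by
      apply Filter.tendsto_atTop_atTop.mpr
      intro w
      exact ⟨w, fun v hv => le_trans hv (Nat.le_mul_of_pos_right v (by omega))⟩
    have hGmono : ∀ m : ℕ, Monotone (fun t => F (t / a m + b m) ^ (m*n)) := by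
      intro m t t' htt'
      apply pow_le_pow_left₀ (hF0 _)
      apply hF.1
      have := (div_le_div_iff_of_pos_right (ha m)).mpr htt'
      linarith [(div_le_div_iff_of_pos_right (ha m)).mpr htt']
    have hGU : ∀ x, x ∉ {x | ¬ContinuousAt H x} →
        Filter.Tendsto (fun m => F (x / a m + b m) ^ (m*n)) Filter.atTop
          (nhds (H x ^ n)) := by
      intro x hx
      have hcx : ContinuousAt H x := not_not.mp hx
      have h1 := (hconv x hcx).pow n
      have h2 : (fun m : ℕ => (F (x / a m + b m) ^ m) ^ n)
          = fun m => F (x / a m + b m) ^ (m*n) := by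
        funext m
        rw [← pow_mul]
      rwa [h2] at h1
    have hGV : ∀ x, x ∉ {x | ¬ContinuousAt H x} →
        Filter.Tendsto (fun m =>
          F (((a m / a (m*n)) * x + a m * (b (m*n) - b m)) / a m + b m) ^ (m*n))
          Filter.atTop (nhds (H x)) := by
      intro x hx
      have hcx : ContinuousAt H x := not_not.mp hx
      have h1 : Filter.Tendsto (fun m => F (x / a (m*n) + b (m*n)) ^ (m*n))
          Filter.atTop (nhds (H x)) := (hconv x hcx).comp hmuln
      have h2 : ∀ m : ℕ, ((a m / a (m*n)) * x + a m * (b (m*n) - b m)) / a m + b m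
          = x / a (m*n) + b (m*n) := by
        intro m
        have h3 := (ha m).ne'
        have h4 := (ha (m*n)).ne'
        field_simp
        ring
      simpa only [h2] using h1
    obtain ⟨c, hc, d, hcd⟩ := ftg_conv_types
      (fun m t => F (t / a m + b m) ^ (m*n)) hGmono
      (fun x => H x ^ n) H hUcdf hH hUnd ⟨x₀, hx₀0, hx₀1⟩
      {x | ¬ContinuousAt H x} (hH.1.countable_not_continuousAt)
      (fun m => a m / a (m*n)) (fun m => div_pos (ha m) (ha (m*n)))
      (fun m => a m * (b (m*n) - b m)) hGU hGV
    exact ⟨c, d, hc, fun x => hcd x⟩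
  -- Step 2 : choose the normalizing constants
  have hch : ∀ n : ℕ, ∃ p : ℝ × ℝ, 1 ≤ n → (0 < p.1 ∧ ∀ x, H x = H (p.1*x+p.2)^n) := by
    intro n
    by_cases hn : 1 ≤ n
    · obtain ⟨c, d, hc, hcd⟩ := key n hn
      exact ⟨(c, d), fun _ => ⟨hc, hcd⟩⟩
    · exact ⟨(1, 0), fun h => absurd h hn⟩
  choose cd hcd using hch
  set c : ℕ → ℝ := fun n => (cd n).1 with hcdef
  set d : ℕ → ℝ := fun n => (cd n).2 with hddef
  have hcpos : ∀ n : ℕ, 1 ≤ n → 0 < c n := fun n hn => (hcd n hn).1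
  have hspec : ∀ n : ℕ, 1 ≤ n → ∀ x, H x = H (c n * x + d n) ^ n :=
    fun n hn => (hcd n hn).2
  have huniq : ∀ n : ℕ, 1 ≤ n → ∀ c₁ d₁ c₂ d₂ : ℝ, 0 < c₁ → 0 < c₂ →
      (∀ x, H x = H (c₁*x+d₁)^n) → (∀ x, H x = H (c₂*x+d₂)^n) →
      c₁ = c₂ ∧ d₁ = d₂ := by
    intro n hn c₁ d₁ c₂ d₂ h1 h2 he1 he2
    apply ftg_affine_unique hH ⟨x₀, hx₀0, hx₀1⟩ h1 h2
    intro x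
    have e1 := ftg_pow_root (hH0 (c₁*x+d₁)) hn (he1 x)
    have e2 := ftg_pow_root (hH0 (c₂*x+d₂)) hn (he2 x)
    rw [e1, e2]
  have hc1 : c 1 = 1 ∧ d 1 = 0 := by
    apply huniq 1 le_rfl _ _ _ _ (hcpos 1 le_rfl) one_pos (hspec 1 le_rfl)
    intro x
    rw [one_mul, add_zero, pow_one]
  have hcomp : ∀ m n : ℕ, 1 ≤ m → 1 ≤ n →
      c (m*n) = c n * c m ∧ d (m*n) = c n * d m + d n := by
    intro m n hm hn
    have hmn : 1 ≤ m*n := Nat.one_le_iff_ne_zero.mpr (Nat.mul_ne_zero (by omega) (by omega))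
    apply huniq (m*n) hmn _ _ _ _ (hcpos _ hmn)
      (mul_pos (hcpos n hn) (hcpos m hm)) (hspec _ hmn)
    intro x
    have h1 := hspec m hm x
    have h2 := hspec n hn (c m * x + d m)
    rw [h2] at h1
    rw [h1, ← pow_mul, mul_comm n m]
    congr 2
    ring
  clear_value c d
  -- Step 3 : case analysis
  by_cases hcase : ∀ n : ℕ, 1 ≤ n → c n = 1
  · -- Gumbel
    have hd : ∀ n : ℕ, 1 ≤ n → ∀ x, H x = H (x + d n) ^ n := by
      intro n hn x
      have := hspec n hn x
      rwa [hcase n hn, one_mul] at this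
    obtain ⟨a₀, ha₀, b₀, hform⟩ := ftg_case_gumbel H hH ⟨x₀, hx₀0, hx₀1⟩ d hd
    exact ⟨a₀, ha₀, b₀, Or.inl hform⟩
  · push_neg at hcase
    obtain ⟨N, hN1, hNne⟩ := hcase
    have hcN1 : c N - 1 ≠ 0 := sub_ne_zero.mpr hNne
    set μ : ℝ := d N / (c N - 1) with hμdef
    have hdm : ∀ m : ℕ, 1 ≤ m → d m = μ * (c m - 1) := by
      intro m hm
      have h1 := (hcomp m N hm hN1).2
      have h2 := (hcomp N m hN1 hm).2
      rw [mul_comm m N] at h1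
      rw [h1] at h2
      -- h2 : c N * d m + d N = c m * d N + d m
      rw [hμdef]
      field_simp
      nlinarith [h2]
    set Ht : ℝ → ℝ := fun x => H (x - μ) with hHtdef
    have hHtcdf : IsCDF Ht := by
      refine ⟨?_, ?_, ?_, ?_, ?_⟩
      · intro x y hxy
        exact hH.1 (by linarith : x - μ ≤ y - μ)
      · intro x
        have h := hH.2.1 (x - μ)
        have hmap : Filter.Tendsto (fun y : ℝ => y - μ) (nhdsWithin x (Set.Ici x))
            (nhdsWithin (x - μ) (Set.Ici (x - μ))) := by
          rw [tendsto_nhdsWithin_iff]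
          constructor
          · exact ((continuous_id.sub continuous_const).tendsto x).mono_left
              nhdsWithin_le_nhds
          · exact eventually_mem_nhdsWithin.mono
              (fun y hy => sub_le_sub_right hy μ)
        exact Filter.Tendsto.comp h hmap
      · intro x
        exact hH.2.2.1 (x - μ)
      · apply hH.2.2.2.1.comp
        simpa [sub_eq_add_neg] using
          (tendsto_atBot_add_const_right Filter.atBot (-μ) tendsto_id)
      · apply hH.2.2.2.2.comp
        simpa [sub_eq_add_neg] using
          (tendsto_atTop_add_const_right Filter.atTop (-μ) tendsto_id)
    have heqt : ∀ n : ℕ, 1 ≤ n → ∀ x, Ht x = Ht (c n * x) ^ n := by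
      intro n hn x
      have h1 := hspec n hn (x - μ)
      have h2 : c n * (x - μ) + d n = c n * x - μ := by
        rw [hdm n hn]
        ring
      rw [h2] at h1
      exact h1
    set x₁ : ℝ := x₀ + μ with hx₁def
    have hHtx₁ : Ht x₁ = H x₀ := by
      simp only [hHtdef, hx₁def, add_sub_cancel_right]
    have hx₁0 : 0 < Ht x₁ := by rw [hHtx₁]; exact hx₀0
    have hx₁1 : Ht x₁ < 1 := by rw [hHtx₁]; exact hx₀1
    have hHt0 : ∀ x, 0 ≤ Ht x := fun x => (hHtcdf.2.2.1 x).1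
    have hx₁ne : x₁ ≠ 0 := by
      intro hcon
      have h1 := heqt 2 one_le_two 0
      rw [mul_zero] at h1
      have h2 : Ht x₁ = Ht x₁ ^ 2 := by rw [hcon]; exact h1
      nlinarith
    have hroot : ∀ n : ℕ, 1 ≤ n → Ht (c n * x₁) = (Ht x₁) ^ ((n:ℝ)⁻¹) :=
      fun n hn => ftg_pow_root (hHt0 _) hn (heqt n hn x₁)
    have hordered : ∀ m n : ℕ, 1 ≤ m → m < n → c m * x₁ < c n * x₁ := by
      intro m n hm hmn
      have h1 := hroot m hm
      have h2 := hroot n (hm.trans hmn.le)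
      have hlt : Ht (c m * x₁) < Ht (c n * x₁) := by
        rw [h1, h2]
        apply Real.rpow_lt_rpow_of_exponent_gt hx₁0 hx₁1
        rw [inv_eq_one_div, inv_eq_one_div]
        apply one_div_lt_one_div_of_lt (by positivity)
        exact_mod_cast hmn
      by_contra hcon
      push_neg at hcon
      exact absurd (hHtcdf.1 hcon) (not_le.mpr hlt)
    rcases lt_or_gt_of_ne hx₁ne with hx₁neg | hx₁pos
    · -- Weibull : c strictly decreasing
      have hcdec : ∀ m n : ℕ, 1 ≤ m → m < n → c n < c m := by
        intro m n hm hmn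
        have := hordered m n hm hmn
        by_contra hcon
        push_neg at hcon
        nlinarith
      have hflog : ∀ n : ℕ, 1 ≤ n →
          (-Real.log (c n)) * Real.log 2 = (-Real.log (c 2)) * Real.log (n:ℝ) := by
        apply ftg_loglem (fun k => -Real.log (c k))
        · intro m n hm hn
          rw [(hcomp m n hm hn).1,
            Real.log_mul (ne_of_gt (hcpos n hn)) (ne_of_gt (hcpos m hm))]
          ring
        · intro m n hm hmn
          rcases eq_or_lt_of_le hmn with h | h
          · rw [h]
          · have h4 := hcdec m n hm h
            have := (Real.log_le_log_iff (hcpos n (hm.trans hmn)) (hcpos m hm)).mpr h4.le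
            linarith
      have hln2 : 0 < Real.log 2 := Real.log_pos (by norm_num)
      have hc2 : c 2 < 1 := by
        have := hcdec 1 2 le_rfl one_lt_two
        rwa [hc1.1] at this
      set θ : ℝ := -Real.log (c 2) / Real.log 2 with hθdef
      have hθ : 0 < θ := by
        have := Real.log_neg (hcpos 2 one_le_two) hc2
        rw [hθdef]
        apply div_pos (by linarith) hln2
      have hcn : ∀ n : ℕ, 1 ≤ n → c n = (n:ℝ)^(-θ) := by
        intro n hn
        have h1 := hflog n hn
        have hnn : (0:ℝ) < (n:ℝ) := by exact_mod_cast hn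
        have h2 : Real.log (c n) = Real.log (n:ℝ) * (-θ) := by
          have h3 : Real.log (n:ℝ) * (-(-Real.log (c 2) / Real.log 2))
              = (Real.log (c 2) * Real.log (n:ℝ)) / Real.log 2 := by ring
          rw [hθdef, h3, eq_div_iff hln2.ne']
          nlinarith [h1]
        rw [Real.rpow_def_of_pos hnn, ← h2, Real.exp_log (hcpos n hn)]
      have heqt' : ∀ n : ℕ, 1 ≤ n → ∀ x, Ht x = Ht ((n:ℝ)^(-θ) * x) ^ n := by
        intro n hn x
        have := heqt n hn x
        rwa [hcn n hn] at this
      obtain ⟨ξ, hξ, A, hA, hzf, ho⟩ :=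
        ftg_case_weibull Ht hHtcdf x₁ hx₁neg hx₁0 hx₁1 hθ heqt'
      refine ⟨A, hA, A * μ, Or.inr (Or.inr ⟨ξ, hξ, ?_⟩)⟩
      intro x
      have hHx : H x = Ht (x + μ) := by
        simp only [hHtdef, add_sub_cancel_right]
      have hlin : A * x + A * μ = A * (x + μ) := by ring
      constructor
      · intro hle
        have h1 : x + μ ≤ 0 := by nlinarith
        rw [hHx, hzf (x + μ) h1, hlin]
      · intro hlt
        have h1 : 0 < x + μ := by nlinarith
        rw [hHx, ho (x + μ) h1]
    · -- Fréchet : c strictly increasing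
      have hcinc : ∀ m n : ℕ, 1 ≤ m → m < n → c m < c n := by
        intro m n hm hmn
        have := hordered m n hm hmn
        by_contra hcon
        push_neg at hcon
        nlinarith
      have hflog : ∀ n : ℕ, 1 ≤ n →
          Real.log (c n) * Real.log 2 = Real.log (c 2) * Real.log (n:ℝ) := by
        apply ftg_loglem (fun k => Real.log (c k))
        · intro m n hm hn
          rw [(hcomp m n hm hn).1,
            Real.log_mul (ne_of_gt (hcpos n hn)) (ne_of_gt (hcpos m hm))]
          ring
        · intro m n hm hmn
          rcases eq_or_lt_of_le hmn with h | h
          · rw [h]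
          · exact (Real.log_le_log_iff (hcpos m hm)
              (hcpos n (hm.trans hmn))).mpr (hcinc m n hm h).le
      have hln2 : 0 < Real.log 2 := Real.log_pos (by norm_num)
      have hc2 : 1 < c 2 := by
        have := hcinc 1 2 le_rfl one_lt_two
        rwa [hc1.1] at this
      set θ : ℝ := Real.log (c 2) / Real.log 2 with hθdef
      have hθ : 0 < θ := div_pos (Real.log_pos hc2) hln2
      have hcn : ∀ n : ℕ, 1 ≤ n → c n = (n:ℝ)^θ := by
        intro n hn
        have h1 := hflog n hn
        have hnn : (0:ℝ) < (n:ℝ) := by exact_mod_cast hn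
        have h2 : Real.log (c n) = Real.log (n:ℝ) * θ := by
          have h3 : Real.log (n:ℝ) * (Real.log (c 2) / Real.log 2)
              = (Real.log (c 2) * Real.log (n:ℝ)) / Real.log 2 := by ring
          rw [hθdef, h3, eq_div_iff hln2.ne']
          nlinarith [h1]
        rw [Real.rpow_def_of_pos hnn, ← h2, Real.exp_log (hcpos n hn)]
      have heqt' : ∀ n : ℕ, 1 ≤ n → ∀ x, Ht x = Ht ((n:ℝ)^θ * x) ^ n := by
        intro n hn x
        have := heqt n hn x
        rwa [hcn n hn] at this
      obtain ⟨ξ, hξ, A, hA, hz, hf⟩ :=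
        ftg_case_frechet Ht hHtcdf x₁ hx₁pos hx₁0 hx₁1 hθ heqt'
      refine ⟨A, hA, A * μ, Or.inr (Or.inl ⟨ξ, hξ, ?_⟩)⟩
      intro x
      have hHx : H x = Ht (x + μ) := by
        simp only [hHtdef, add_sub_cancel_right]
      have hlin : A * x + A * μ = A * (x + μ) := by ring
      constructor
      · intro hle
        have h1 : x + μ ≤ 0 := by nlinarith
        rw [hHx, hz (x + μ) h1]
      · intro hlt
        have h1 : 0 < x + μ := by nlinarith
        rw [hHx, hf (x + μ) h1, hlin]
end

section
/- Let F : ℝ → ℝ be a continuous cumulative distribution function with F(x) < 1 for all x ∈ ℝ (so its right endpoint x_F = +∞), and suppose there exists ξ > 0 such that for every x > 0, lim_{t→+∞} (1 − F(t x))/(1 − F(t)) = x^{−ξ}. Define γ_m = inf{x : F(x) ≥ 1 − 1/m}. Then for every x > 0, lim_{m→∞} F(γ_m x)^m = exp(−x^{−ξ}). (That is, for the Fréchet type the normalizing sequences may be taken as a_m = γ_m^{−1} and b_m = 0.) -/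
open Filter Real Topology

/-- If `n * w n → c` and `w n ≠ 0`, then `(1 + w n) ^ n → exp c`. -/
lemma aux_pow_exp (w : ℕ → ℝ) (hw : ∀ n, w n ≠ 0) (c : ℝ)
    (h : Tendsto (fun n : ℕ => (n : ℝ) * w n) atTop (𝓝 c)) :
    Tendsto (fun n : ℕ => (1 + w n) ^ n) atTop (𝓝 (Real.exp c)) := by
  have hw0 : Tendsto w atTop (𝓝 0) := by
    have hinv : Tendsto (fun n : ℕ => ((n : ℝ))⁻¹) atTop (𝓝 0) :=
      tendsto_inv_atTop_zero.comp tendsto_natCast_atTop_atTop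
    have := h.mul hinv
    rw [mul_zero] at this
    refine this.congr' ?_
    filter_upwards [eventually_ge_atTop 1] with n hn
    have hn0 : (n : ℝ) ≠ 0 := by positivity
    field_simp
  -- slope of log (1 + y) at 0
  have hd : HasDerivAt (fun y : ℝ => Real.log (1 + y)) 1 0 := by
    have h1 : HasDerivAt (fun y : ℝ => 1 + y) 1 0 := (hasDerivAt_id 0).const_add 1
    have h2 : HasDerivAt Real.log 1 ((1 : ℝ) + 0) := by
      simpa using Real.hasDerivAt_log (by norm_num : ((1 : ℝ) + 0) ≠ 0)
    have h3 := h2.comp 0 h1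
    rw [mul_one] at h3
    exact h3
  have hslope : Tendsto (fun y : ℝ => Real.log (1 + y) / y) (𝓝[≠] 0) (𝓝 1) := by
    have := hasDerivAt_iff_tendsto_slope.mp hd
    refine this.congr' ?_
    filter_upwards [] with y
    simp [slope_def_field, div_eq_div_iff]
  have hw' : Tendsto w atTop (𝓝[≠] (0 : ℝ)) :=
    tendsto_nhdsWithin_of_tendsto_nhds_of_eventually_within w hw0
      (Eventually.of_forall fun n => hw n)
  have hL : Tendsto (fun n : ℕ => Real.log (1 + w n) / w n) atTop (𝓝 1) :=
    hslope.comp hw'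
  have hlog : Tendsto (fun n : ℕ => (n : ℝ) * Real.log (1 + w n)) atTop (𝓝 c) := by
    have := h.mul hL
    rw [mul_one] at this
    refine this.congr fun n => ?_
    field_simp [hw n]
  have hexp : Tendsto (fun n : ℕ => Real.exp ((n : ℝ) * Real.log (1 + w n))) atTop
      (𝓝 (Real.exp c)) := (Real.continuous_exp.tendsto c).comp hlog
  refine hexp.congr' ?_
  have hpos : ∀ᶠ n : ℕ in atTop, (-1 : ℝ) < w n :=
    hw0.eventually (eventually_gt_nhds (by norm_num))
  filter_upwards [hpos] with n hn
  have h1 : (0 : ℝ) < 1 + w n := by linarith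
  rw [Real.exp_nat_mul, Real.exp_log h1]

/-- **Gnedenko's corollary, Fréchet case.** If `F` is a continuous cdf with
`F x < 1` for all `x` (infinite right endpoint) whose tail is regularly varying
with index `-ξ < 0`, then taking `γ m = inf {x | F x ≥ 1 - 1/m}` as normalizing
constants (`a m = (γ m)⁻¹`, `b m = 0`), the normalized maxima converge to the
Fréchet law: `F (γ m * x) ^ m → exp (-x ^ (-ξ))` for every `x > 0`. -/
theorem gnedenko_frechet_normalization
    (F : ℝ → ℝ) (hF : IsCDF F) (hFcont : Continuous F)
    (hlt : ∀ x, F x < 1)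
    (ξ : ℝ) (hξ : 0 < ξ)
    (hreg : ∀ x > (0 : ℝ), Filter.Tendsto (fun t : ℝ => (1 - F (t * x)) / (1 - F t))
      Filter.atTop (nhds (x ^ (-ξ))))
    (γ : ℕ → ℝ) (hγ : ∀ m : ℕ, γ m = sInf {x : ℝ | 1 - 1 / (m : ℝ) ≤ F x}) :
    ∀ x > (0 : ℝ), Filter.Tendsto (fun m : ℕ => (F (γ m * x)) ^ m)
      Filter.atTop (nhds (Real.exp (-(x ^ (-ξ))))) := by
  obtain ⟨hmono, _, _, hbot, htop⟩ := hF
  -- For m ≥ 2, F (γ m) = 1 - 1/m exactly.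
  have key : ∀ m : ℕ, 2 ≤ m → F (γ m) = 1 - 1 / (m : ℝ) := by
    intro m hm
    set p : ℝ := 1 - 1 / (m : ℝ) with hp
    have hm2 : (2 : ℝ) ≤ (m : ℝ) := by exact_mod_cast hm
    have hminv : 1 / (m : ℝ) ≤ 1 / 2 := by
      apply one_div_le_one_div_of_le <;> linarith
    have hminv0 : 0 < 1 / (m : ℝ) := by positivity
    have hp0 : 0 < p := by rw [hp]; linarith
    have hp1 : p < 1 := by rw [hp]; linarith
    have hne : {x : ℝ | p ≤ F x}.Nonempty := by
      obtain ⟨x1, hx1⟩ := (htop.eventually (eventually_gt_nhds hp1)).exists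
      exact ⟨x1, hx1.le⟩
    obtain ⟨x0, hx0⟩ := (hbot.eventually (eventually_lt_nhds hp0)).exists
    have hbdd : BddBelow {x : ℝ | p ≤ F x} := by
      refine ⟨x0, fun y hy => ?_⟩
      by_contra h
      push_neg at h
      have := hmono h.le
      have : F y < p := lt_of_le_of_lt this hx0
      exact absurd hy (not_le.mpr this)
    have hcl : IsClosed {x : ℝ | p ≤ F x} := isClosed_le continuous_const hFcont
    have hmem : γ m ∈ {x : ℝ | p ≤ F x} := by
      rw [hγ m]
      exact hcl.csInf_mem hne hbdd
    have hge : p ≤ F (γ m) := hmem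
    have hle : F (γ m) ≤ p := by
      have htend : Tendsto F (𝓝[<] (γ m)) (𝓝 (F (γ m))) :=
        (hFcont.continuousAt).continuousWithinAt
      refine le_of_tendsto htend ?_
      filter_upwards [eventually_mem_nhdsWithin] with y hy
      have hy' : y < γ m := hy
      by_contra hcon
      push_neg at hcon
      have : γ m ≤ y := by
        rw [hγ m]
        exact csInf_le hbdd hcon.le
      linarith
    linarith
  -- γ m → ∞
  have hγtop : Tendsto γ atTop atTop := by
    rw [tendsto_atTop]
    intro M
    have h1 : ∀ᶠ m : ℕ in atTop, 1 / (m : ℝ) < 1 - F M :=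
      tendsto_one_div_atTop_nhds_zero_nat.eventually
        (eventually_lt_nhds (by linarith [hlt M]))
    filter_upwards [h1, eventually_ge_atTop 2] with m hm h2
    have hFm := key m h2
    have hlt' : F M < F (γ m) := by rw [hFm]; linarith
    by_contra h
    push_neg at h
    have := hmono h.le
    linarith
  intro x hx
  have h1 := (hreg x hx).comp hγtop
  have h2 : Tendsto (fun m : ℕ => (m : ℝ) * (1 - F (γ m * x))) atTop (𝓝 (x ^ (-ξ))) := by
    refine h1.congr' ?_
    filter_upwards [eventually_ge_atTop 2] with m hm
    have hk := key m hm
    have hm0 : (m : ℝ) ≠ 0 := by positivity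
    show (1 - F (γ m * x)) / (1 - F (γ m)) = (m : ℝ) * (1 - F (γ m * x))
    rw [hk]
    have : (1 : ℝ) - (1 - 1 / (m : ℝ)) = 1 / (m : ℝ) := by ring
    rw [this]
    field_simp
  have h3 : Tendsto (fun m : ℕ => (m : ℝ) * (F (γ m * x) - 1)) atTop (𝓝 (-(x ^ (-ξ)))) := by
    have := h2.neg
    refine this.congr fun m => by ring
  have hw : ∀ m : ℕ, F (γ m * x) - 1 ≠ 0 := fun m => sub_ne_zero.mpr (hlt _).ne
  have := aux_pow_exp (fun m => F (γ m * x) - 1) hw _ h3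
  refine this.congr fun m => ?_
  norm_num
end

section
/- Let F : ℝ → ℝ be a continuous cumulative distribution function with finite right endpoint x_F = sup{x : F(x) < 1} < ∞, and suppose there exists ξ > 0 such that for every x > 0, lim_{t→0+} (1 − F(x_F − t x))/(1 − F(x_F − t)) = x^{ξ}. Define γ_m = inf{x : F(x) ≥ 1 − 1/m}. Then for every x < 0, lim_{m→∞} F(x_F + x·(x_F − γ_m))^m = exp(−(−x)^{ξ}). (That is, for the Weibull type the normalizing sequences may be taken as a_m = (x_F − γ_m)^{−1} and b_m = x_F.) -/
open Filter Real Topology Set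


lemma aux_tendsto_pow_exp_neg {u : ℕ → ℝ} {c : ℝ} (hc : 0 < c)
    (hu : Filter.Tendsto u Filter.atTop (nhds c)) :
    Filter.Tendsto (fun m : ℕ => (1 - u m / m) ^ m) Filter.atTop
      (nhds (Real.exp (-c))) := by
  have ht : Tendsto (fun m : ℕ => -(u m) / m) atTop (𝓝 0) :=
    Tendsto.div_atTop (hu.neg) tendsto_natCast_atTop_atTop
  set t : ℕ → ℝ := fun m => -(u m) / m with ht_def
  set z : ℕ → ℝ := fun m => 1 + t m with hz_def
  have hz1 : Tendsto z atTop (𝓝 1) := by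
    simpa using ht.const_add 1
  have hev : ∀ᶠ m : ℕ in atTop, 0 < u m ∧ 1 ≤ m ∧ |t m| < 1/2 := by
    filter_upwards [hu.eventually (lt_mem_nhds (half_lt_self hc)),
      eventually_ge_atTop 1,
      ht.eventually (Metric.ball_mem_nhds (0:ℝ) (by norm_num : (0:ℝ) < 1/2))]
      with m h1 h2 h3
    exact ⟨lt_trans (half_pos hc) h1, h2, by simpa [Real.dist_eq] using h3⟩
  have hzne : ∀ᶠ m : ℕ in atTop, z m ≠ 1 := by
    filter_upwards [hev] with m ⟨h1, h2, _⟩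
    have hm : (0:ℝ) < m := by exact_mod_cast h2
    have : t m < 0 := div_neg_of_neg_of_pos (neg_neg_iff_pos.mpr h1) hm
    simp only [hz_def]; intro h; nlinarith
  have hslope : Tendsto (fun m => slope Real.log 1 (z m)) atTop (𝓝 1) := by
    have h := hasDerivAt_iff_tendsto_slope.mp (Real.hasDerivAt_log one_ne_zero)
    have := h.comp (tendsto_nhdsWithin_iff.mpr ⟨hz1, hzne⟩)
    rw [inv_one] at this
    exact this
  have hmul : Tendsto (fun m : ℕ => (m : ℝ) * Real.log (z m)) atTop (𝓝 (-c)) := by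
    have h := hslope.mul hu.neg
    rw [show (1 : ℝ) * -c = -c by ring] at h
    refine h.congr' ?_
    filter_upwards [hev, hzne] with m ⟨h1, h2, h3⟩ hne
    have hm : (0:ℝ) < m := by exact_mod_cast h2
    have htm : t m ≠ 0 := sub_ne_zero.mp (by simpa [hz_def, add_sub_cancel_left] using sub_ne_zero.mpr hne)
    have : slope Real.log 1 (z m) = Real.log (z m) / t m := by
      simp [slope_def_field, hz_def, Real.log_one]
    rw [this]
    field_simp [ht_def]
    rw [mul_assoc, show t m * (m:ℝ) = -u m from div_mul_cancel₀ _ hm.ne']; ring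
  have hexp := (Real.continuous_exp.tendsto _).comp hmul
  refine hexp.congr' ?_
  filter_upwards [hev] with m ⟨h1, h2, h3⟩
  have hzpos : 0 < z m := by
    have := abs_lt.mp h3
    simp only [hz_def]; linarith [this.1]
  have : Real.exp ((m:ℝ) * Real.log (z m)) = (z m) ^ m := by
    rw [Real.exp_nat_mul, Real.exp_log hzpos]
  simp only [Function.comp_apply, this]
  simp only [hz_def, ht_def]; ring

/-- **Gnedenko's corollary, Weibull case.** If `F` is a continuous cdf with finite
right endpoint `xF = sup {x | F x < 1}` whose tail near `xF` is regularly varying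
with index `ξ > 0`, then taking `a m = (xF - γ m)⁻¹` and `b m = xF` with
`γ m = inf {x | F x ≥ 1 - 1/m}` as normalizing constants, the normalized maxima
converge to the Weibull law: `F (xF + x * (xF - γ m)) ^ m → exp (-(-x) ^ ξ)`
for every `x < 0`. -/
theorem gnedenko_weibull_normalization
    (F : ℝ → ℝ) (hF : IsCDF F) (hFcont : Continuous F)
    (hbdd : BddAbove {x : ℝ | F x < 1})
    (xF : ℝ) (hxF : xF = sSup {x : ℝ | F x < 1})
    (ξ : ℝ) (hξ : 0 < ξ)
    (hreg : ∀ x > (0 : ℝ),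
      Filter.Tendsto (fun t : ℝ => (1 - F (xF - t * x)) / (1 - F (xF - t)))
        (nhdsWithin 0 (Set.Ioi 0)) (nhds (x ^ ξ)))
    (γ : ℕ → ℝ) (hγ : ∀ m : ℕ, γ m = sInf {x : ℝ | 1 - 1 / (m : ℝ) ≤ F x}) :
    ∀ x < (0 : ℝ), Filter.Tendsto (fun m : ℕ => (F (xF + x * (xF - γ m))) ^ m)
      Filter.atTop (nhds (Real.exp (-((-x) ^ ξ)))) := by
  obtain ⟨hmono, hrc, hbound, hbot, htop⟩ := hF
  -- the set {F < 1} is nonempty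
  have hne : {x : ℝ | F x < 1}.Nonempty := by
    obtain ⟨z, hz⟩ := (hbot.eventually (gt_mem_nhds one_pos)).exists
    exact ⟨z, hz⟩
  -- F = 1 strictly above xF
  have hone : ∀ z, xF < z → F z = 1 := by
    intro z hz
    have hzn : z ∉ {x : ℝ | F x < 1} := by
      intro hmem
      exact absurd (hxF ▸ le_csSup hbdd hmem) (not_le.mpr hz)
    exact le_antisymm (hbound z).2 (not_lt.mp hzn)
  -- F xF = 1 by continuity
  have hFxF : F xF = 1 := by
    have h1 : Tendsto (fun n : ℕ => xF + 1 / (n + 1 : ℝ)) atTop (𝓝 xF) := by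
      simpa using tendsto_one_div_add_atTop_nhds_zero_nat.const_add xF
    have h2 : Tendsto (fun n : ℕ => F (xF + 1 / (n + 1 : ℝ))) atTop (𝓝 (F xF)) :=
      (hFcont.tendsto xF).comp h1
    have h3 : (fun n : ℕ => F (xF + 1 / (n + 1 : ℝ))) = fun _ : ℕ => (1 : ℝ) := by
      funext n
      refine hone _ ?_
      have : (0 : ℝ) < 1 / (n + 1 : ℝ) := by positivity
      linarith
    rw [h3] at h2
    exact tendsto_nhds_unique h2 tendsto_const_nhds
  -- F < 1 strictly below xF
  have hlt : ∀ t : ℝ, 0 < t → F (xF - t) < 1 := by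
    intro t ht
    by_contra h
    have h1 : F (xF - t) = 1 := le_antisymm (hbound _).2 (not_lt.mp h)
    have h2 : xF ≤ xF - t := by
      have hub : ∀ a ∈ {x : ℝ | F x < 1}, a ≤ xF - t := by
        intro a ha
        by_contra hb
        push_neg at hb
        have := hmono hb.le
        rw [h1] at this
        exact absurd this (not_le.mpr ha)
      calc xF = sSup {x : ℝ | F x < 1} := hxF
        _ ≤ xF - t := csSup_le hne hub
    linarith
  -- facts about γ
  have hSne : ∀ m : ℕ, {x : ℝ | 1 - 1 / (m : ℝ) ≤ F x}.Nonempty := by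
    intro m
    refine ⟨xF + 1, ?_⟩
    have : F (xF + 1) = 1 := hone _ (by linarith)
    have hm : (0 : ℝ) ≤ 1 / (m : ℝ) := by positivity
    simp only [Set.mem_setOf_eq, this]
    linarith
  have hSbdd : ∀ m : ℕ, 2 ≤ m → BddBelow {x : ℝ | 1 - 1 / (m : ℝ) ≤ F x} := by
    intro m hm
    have hm1 : (0 : ℝ) < 1 - 1 / (m : ℝ) := by
      have : (2 : ℝ) ≤ (m : ℝ) := by exact_mod_cast hm
      have : 1 / (m : ℝ) ≤ 1 / 2 := by
        apply one_div_le_one_div_of_le <;> linarith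
      linarith
    obtain ⟨z, hz⟩ := (hbot.eventually (gt_mem_nhds hm1)).exists
    refine ⟨z, fun s hs => ?_⟩
    by_contra hc
    push_neg at hc
    have := hmono hc.le
    have hs' : 1 - 1 / (m : ℝ) ≤ F s := hs
    linarith
  have hSclosed : ∀ m : ℕ, IsClosed {x : ℝ | 1 - 1 / (m : ℝ) ≤ F x} :=
    fun m => isClosed_Ici.preimage hFcont
  have hγmem : ∀ m : ℕ, 2 ≤ m → 1 - 1 / (m : ℝ) ≤ F (γ m) := by
    intro m hm
    rw [hγ m]
    exact (hSclosed m).csInf_mem (hSne m) (hSbdd m hm)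
  have hγeq : ∀ m : ℕ, 2 ≤ m → F (γ m) = 1 - 1 / (m : ℝ) := by
    intro m hm
    refine le_antisymm ?_ (hγmem m hm)
    by_contra h
    push_neg at h
    have hev : ∀ᶠ z in 𝓝 (γ m), 1 - 1 / (m : ℝ) < F z :=
      (hFcont.tendsto _).eventually (lt_mem_nhds h)
    obtain ⟨δ, hδ, hball⟩ := Metric.eventually_nhds_iff.mp hev
    have hmem : γ m - δ / 2 ∈ {x : ℝ | 1 - 1 / (m : ℝ) ≤ F x} := by
      refine le_of_lt (hball ?_)
      simp only [Real.dist_eq]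
      rw [abs_of_nonpos (by linarith)]
      linarith
    have := csInf_le (hSbdd m hm) hmem
    rw [← hγ m] at this
    linarith
  have hγlt : ∀ m : ℕ, 2 ≤ m → γ m < xF := by
    intro m hm
    have h1 : F (γ m) < 1 := by
      have : (0 : ℝ) < 1 / (m : ℝ) := by positivity
      rw [hγeq m hm]; linarith
    have h2 : γ m ≤ xF := hxF ▸ le_csSup hbdd h1
    rcases lt_or_eq_of_le h2 with h | h
    · exact h
    · rw [h, hFxF] at h1; linarith
  -- γ m → xF
  have hγtend : Tendsto γ atTop (𝓝 xF) := by
    rw [Metric.tendsto_atTop]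
    intro ε hε
    have hFlt : F (xF - ε / 2) < 1 := hlt _ (by linarith)
    obtain ⟨N0, hN0⟩ := exists_nat_gt (1 / (1 - F (xF - ε / 2)))
    refine ⟨max N0 2, fun n hn => ?_⟩
    have hn2 : 2 ≤ n := le_trans (le_max_right _ _) hn
    have hnN : N0 ≤ n := le_trans (le_max_left _ _) hn
    have hFpos : (0 : ℝ) < 1 - F (xF - ε / 2) := by linarith
    have hnpos : (0 : ℝ) < (n : ℝ) := by
      have : (2 : ℝ) ≤ (n : ℝ) := by exact_mod_cast hn2
      linarith
    have h1n : 1 / (n : ℝ) < 1 - F (xF - ε / 2) := by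
      have hN0' : 1 / (1 - F (xF - ε / 2)) < (n : ℝ) := by
        refine lt_of_lt_of_le hN0 ?_
        exact_mod_cast hnN
      rw [div_lt_iff₀ hFpos] at hN0'
      rw [div_lt_iff₀ hnpos]
      linarith [mul_comm (n : ℝ) (1 - F (xF - ε / 2))]
    -- xF - ε/2 is a lower bound of the set
    have hlb : xF - ε / 2 ≤ γ n := by
      rw [hγ n]
      refine le_csInf (hSne n) fun s hs => ?_
      by_contra hc
      push_neg at hc
      have h2 := hmono hc.le
      have hs' : 1 - 1 / (n : ℝ) ≤ F s := hs
      have : F s ≤ F (xF - ε / 2) := h2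
      linarith
    have hub : γ n ≤ xF := le_of_lt (hγlt n hn2)
    rw [Real.dist_eq, abs_of_nonpos (by linarith)]
    linarith
  -- now the main limit
  intro x hx
  set y := -x with hy
  have hy0 : 0 < y := by simp [hy]; linarith
  set d : ℕ → ℝ := fun m => xF - γ m with hd
  have hdtend : Tendsto d atTop (𝓝[>] (0 : ℝ)) := by
    rw [tendsto_nhdsWithin_iff]
    constructor
    · have h0 : Tendsto (fun m : ℕ => xF - γ m) atTop (𝓝 (xF - xF)) :=
        Tendsto.sub tendsto_const_nhds hγtend
      simpa using h0
    · filter_upwards [eventually_ge_atTop 2] with m hm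
      exact sub_pos.mpr (hγlt m hm)
  have hcomp := (hreg y hy0).comp hdtend
  -- the ratio equals m * (1 - F (xF - d m * y)) eventually
  set u : ℕ → ℝ := fun m => (m : ℝ) * (1 - F (xF - d m * y)) with hu_def
  have hutend : Tendsto u atTop (𝓝 (y ^ ξ)) := by
    refine hcomp.congr' ?_
    filter_upwards [eventually_ge_atTop 2] with m hm
    have h1 : xF - d m = γ m := by simp [hd]
    have h2 : 1 - F (xF - d m) = 1 / (m : ℝ) := by
      rw [h1, hγeq m hm]; ring
    simp only [Function.comp_apply, h2, hu_def]
    rw [div_div_eq_mul_div]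
    ring
  have hypos : 0 < y ^ ξ := Real.rpow_pos_of_pos hy0 ξ
  have hfinal := aux_tendsto_pow_exp_neg hypos hutend
  have heq : (fun m : ℕ => (F (xF + x * (xF - γ m))) ^ m) =ᶠ[atTop]
      fun m : ℕ => (1 - u m / m) ^ m := by
    filter_upwards [eventually_ge_atTop 2] with m hm
    have hmne : (m : ℝ) ≠ 0 := by
      have : (2 : ℝ) ≤ (m : ℝ) := by exact_mod_cast hm
      linarith
    have h1 : xF + x * (xF - γ m) = xF - d m * y := by
      simp only [hd, hy]; ring
    rw [h1]
    have h2 : u m / m = 1 - F (xF - d m * y) := by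
      rw [hu_def]
      field_simp
    rw [h2]
    ring_nf
  have : (-x) ^ ξ = y ^ ξ := by rw [hy]
  rw [this]
  exact hfinal.congr' heq.symm
end
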